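/- arXiv:2102.04998 — 5 statements merged into one kernel-verified Lean document; each statement's English description precedes it below -/
import Mathlib

section
/- If the activation is h-smoothly approximately ReLU (for some h > 0) and the weights V satisfy ‖V‖ ≥ √(L + 1/2), then ‖∇_V J(V)‖ ≤ √((L+1)·p) · ‖V‖^{L+1} · min{ J(V), 1 }. -/
open scoped BigOperators
noncomputable section

abbrev Params (L p : ℕ) := EuclideanSpace ℝ ((Fin L × Fin p × Fin p) ⊕ Fin p)

def layerMat {L p : ℕ} (w : Params L p) (ℓ : Fin L) : Matrix (Fin p) (Fin p) ℝ :=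
  Matrix.of fun i j => w (Sum.inl (ℓ, i, j))

def outVec {L p : ℕ} (w : Params L p) : Fin p → ℝ := fun j => w (Sum.inr j)

def SmoothApproxReLU (φ : ℝ → ℝ) (h : ℝ) : Prop :=
  Differentiable ℝ φ ∧ φ 0 = 0 ∧
    (∀ z₁ z₂ : ℝ, |deriv φ z₁ - deriv φ z₂| ≤ (1 / h) * |z₁ - z₂|) ∧
    (∀ z : ℝ, |deriv φ z| ≤ 1) ∧ (∀ z : ℝ, |deriv φ z * z - φ z| ≤ h / 2)

def feat {L p : ℕ} (φ : ℝ → ℝ) (w : Params L p) (x : Fin p → ℝ) : ℕ → Fin p → ℝ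
  | 0 => x
  | ℓ + 1 =>
    if hl : ℓ < L then fun i => φ ((layerMat w ⟨ℓ, hl⟩).mulVec (feat φ w x ℓ) i)
    else feat φ w x ℓ

def netOut {L p : ℕ} (φ : ℝ → ℝ) (w : Params L p) (x : Fin p → ℝ) : ℝ :=
  ∑ j, outVec w j * feat φ w x L j

def lossS {L p : ℕ} (φ : ℝ → ℝ) (x : Fin p → ℝ) (y : ℝ) (w : Params L p) : ℝ :=
  Real.log (1 + Real.exp (-(y * netOut φ w x)))

def loss {L p n : ℕ} (φ : ℝ → ℝ) (x : Fin n → Fin p → ℝ) (y : Fin n → ℝ) (w : Params L p) : ℝ :=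
  (1 / (n : ℝ)) * ∑ s, lossS φ (x s) (y s) w

def enorm2 {p : ℕ} (v : Fin p → ℝ) : ℝ := Real.sqrt (∑ i, v i ^ 2)

def hmax (L p : ℕ) (J1 nV1 : ℝ) : ℝ :=
  min ((L : ℝ) ^ ((L : ℝ) / 2 - 3) * Real.log (1 / J1) / (24 * Real.sqrt p * nV1 ^ L)) 1

def alphaMax (L p : ℕ) (J1 nV1 h : ℝ) : ℝ :=
  min (h / (1024 * ((L : ℝ) + 1) ^ 2 * p * J1 * nV1 ^ (3 * L + 5)))
    (((L : ℝ) + 1 / 2) * nV1 ^ 2 /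
      (2 * L * ((L : ℝ) + 3 / 4) ^ 2 * J1 * Real.log (1 / J1) ^ ((2 : ℝ) / L)))

def Qtilde (L : ℕ) (J1 nV1 α : ℝ) : ℝ :=
  (L : ℝ) * ((L : ℝ) + 3 / 4) ^ 2 * α * J1 * Real.log (1 / J1) ^ ((2 : ℝ) / L) /
    (((L : ℝ) + 1 / 2) * nV1 ^ 2)

def lipGrad {L p : ℕ} (J : Params L p → ℝ) (v : Params L p) : ℝ :=
  Filter.limsup (fun w : Params L p => ‖gradient J v - gradient J w‖ / ‖v - w‖)
    (nhdsWithin v {v}ᶜ)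

namespace Stmt3

lemma enorm_nonneg {p : ℕ} (v : Fin p → ℝ) : 0 ≤ enorm2 v := Real.sqrt_nonneg _

lemma sq_enorm {p : ℕ} (v : Fin p → ℝ) : enorm2 v ^ 2 = ∑ i, v i ^ 2 :=
  Real.sq_sqrt (by positivity)

lemma abs_sum_mul_le {p : ℕ} (a w : Fin p → ℝ) : |∑ j, a j * w j| ≤ enorm2 a * enorm2 w := by
  rw [← Real.sqrt_sq_eq_abs, enorm2, enorm2, ← Real.sqrt_mul (by positivity)]
  exact Real.sqrt_le_sqrt (Finset.sum_mul_sq_le_sq_mul_sq Finset.univ a w)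

lemma enorm_mono {p : ℕ} (a b : Fin p → ℝ) (hab : ∀ i, |a i| ≤ |b i|) : enorm2 a ≤ enorm2 b := by
  apply Real.sqrt_le_sqrt
  apply Finset.sum_le_sum
  intro i _
  calc a i ^ 2 = |a i| ^ 2 := (sq_abs _).symm
    _ ≤ |b i| ^ 2 := pow_le_pow_left₀ (abs_nonneg _) (hab i) 2
    _ = b i ^ 2 := sq_abs _

lemma enorm_eq_norm {p : ℕ} (v : Fin p → ℝ) :
    enorm2 v = ‖(WithLp.equiv 2 (Fin p → ℝ)).symm v‖ := by
  rw [EuclideanSpace.norm_eq]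
  simp [enorm2, sq_abs]

lemma enorm_add_le {p : ℕ} (a b : Fin p → ℝ) :
    enorm2 (fun i => a i + b i) ≤ enorm2 a + enorm2 b := by
  rw [enorm_eq_norm, enorm_eq_norm, enorm_eq_norm]
  exact norm_add_le ((WithLp.equiv 2 (Fin p → ℝ)).symm a) ((WithLp.equiv 2 (Fin p → ℝ)).symm b)

lemma enorm_mulVec_le {p : ℕ} (A : Matrix (Fin p) (Fin p) ℝ) (v : Fin p → ℝ) :
    enorm2 (A.mulVec v) ≤ Real.sqrt (∑ i, ∑ j, A i j ^ 2) * enorm2 v := by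
  rw [enorm2, enorm2, ← Real.sqrt_mul (by positivity), Finset.sum_mul]
  apply Real.sqrt_le_sqrt
  apply Finset.sum_le_sum
  intro i _
  have : A.mulVec v i = ∑ j, A i j * v j := rfl
  rw [this]
  exact Finset.sum_mul_sq_le_sq_mul_sq Finset.univ (A i) v

def bk {L p : ℕ} (u : Params L p) (k : Fin L) : ℝ :=
  Real.sqrt (∑ i, ∑ j, u (Sum.inl (k, i, j)) ^ 2)

def bo {L p : ℕ} (u : Params L p) : ℝ := Real.sqrt (∑ j, u (Sum.inr j) ^ 2)

def S {L p : ℕ} (u : Params L p) : ℝ := (∑ k, bk u k) + bo u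

lemma bk_nonneg {L p : ℕ} (u : Params L p) (k : Fin L) : 0 ≤ bk u k := Real.sqrt_nonneg _
lemma bo_nonneg {L p : ℕ} (u : Params L p) : 0 ≤ bo u := Real.sqrt_nonneg _

lemma norm_sq_split {L p : ℕ} (u : Params L p) :
    (∑ k, bk u k ^ 2) + bo u ^ 2 = ‖u‖ ^ 2 := by
  have hbk : ∀ k : Fin L, bk u k ^ 2 = ∑ i, ∑ j, u (Sum.inl (k, i, j)) ^ 2 := fun k =>
    Real.sq_sqrt (by positivity)
  have hbo : bo u ^ 2 = ∑ j, u (Sum.inr j) ^ 2 := Real.sq_sqrt (by positivity)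
  rw [EuclideanSpace.norm_eq, Real.sq_sqrt (by positivity), hbo]
  rw [Finset.sum_congr rfl (fun k _ => hbk k)]
  rw [Fintype.sum_sum_type]
  simp [Fintype.sum_prod_type, sq_abs]

lemma bk_le_norm {L p : ℕ} (u : Params L p) (k : Fin L) : bk u k ≤ ‖u‖ := by
  have h1 : bk u k ^ 2 ≤ ‖u‖ ^ 2 := by
    rw [← norm_sq_split u]
    have h2 : bk u k ^ 2 ≤ ∑ k', bk u k' ^ 2 :=
      Finset.single_le_sum (f := fun k' => bk u k' ^ 2) (fun _ _ => sq_nonneg _)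
        (Finset.mem_univ k)
    nlinarith [sq_nonneg (bo u)]
  calc bk u k = Real.sqrt (bk u k ^ 2) := (Real.sqrt_sq (bk_nonneg u k)).symm
    _ ≤ Real.sqrt (‖u‖ ^ 2) := Real.sqrt_le_sqrt h1
    _ = ‖u‖ := Real.sqrt_sq (norm_nonneg u)

lemma bo_le_norm {L p : ℕ} (u : Params L p) : bo u ≤ ‖u‖ := by
  have h1 : bo u ^ 2 ≤ ‖u‖ ^ 2 := by
    rw [← norm_sq_split u]
    have h2 : (0:ℝ) ≤ ∑ k', bk u k' ^ 2 := Finset.sum_nonneg fun _ _ => sq_nonneg _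
    linarith
  calc bo u = Real.sqrt (bo u ^ 2) := (Real.sqrt_sq (bo_nonneg u)).symm
    _ ≤ Real.sqrt (‖u‖ ^ 2) := Real.sqrt_le_sqrt h1
    _ = ‖u‖ := Real.sqrt_sq (norm_nonneg u)

lemma S_nonneg {L p : ℕ} (u : Params L p) : 0 ≤ S u :=
  add_nonneg (Finset.sum_nonneg fun k _ => bk_nonneg u k) (bo_nonneg u)

lemma S_le {L p : ℕ} (u : Params L p) : S u ≤ Real.sqrt ((L : ℝ) + 1) * ‖u‖ := by
  set c : Fin L ⊕ Unit → ℝ := Sum.elim (bk u) (fun _ => bo u) with hc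
  have hsum : ∑ i, c i = S u := by simp [hc, Fintype.sum_sum_type, S]
  have hsq : ∑ i, c i ^ 2 = ‖u‖ ^ 2 := by
    rw [← norm_sq_split u]; simp [hc, Fintype.sum_sum_type]
  have hcs := Finset.sum_mul_sq_le_sq_mul_sq Finset.univ c (fun _ => (1:ℝ))
  simp only [mul_one, one_pow] at hcs
  have hcard : ∑ _i : Fin L ⊕ Unit, (1:ℝ) = (L:ℝ) + 1 := by simp
  rw [hsum, hsq, hcard] at hcs
  have h1 : S u = Real.sqrt (S u ^ 2) := (Real.sqrt_sq (S_nonneg u)).symm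
  rw [h1]
  calc Real.sqrt (S u ^ 2) ≤ Real.sqrt (((L:ℝ)+1) * ‖u‖^2) := by
        apply Real.sqrt_le_sqrt; nlinarith
    _ = Real.sqrt ((L:ℝ)+1) * ‖u‖ := by
        rw [Real.sqrt_mul (by positivity), Real.sqrt_sq (norm_nonneg u)]

end Stmt3

namespace Stmt3

lemma phi_abs_le {φ : ℝ → ℝ} {h : ℝ} (hφ : SmoothApproxReLU φ h) (z : ℝ) : |φ z| ≤ |z| := by
  have hlip : LipschitzWith 1 φ := by
    apply lipschitzWith_of_nnnorm_deriv_le hφ.1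
    intro z
    rw [← NNReal.coe_le_coe]
    simpa [Real.norm_eq_abs] using hφ.2.2.2.1 z
  have := hlip.dist_le_mul z 0
  simpa [Real.dist_eq, hφ.2.1] using this

lemma sum_ite_succ {L p : ℕ} (u : Params L p) (ℓ : ℕ) (hl : ℓ < L) :
    (∑ k : Fin L, if (k : ℕ) < ℓ + 1 then bk u k else 0)
      = (∑ k : Fin L, if (k : ℕ) < ℓ then bk u k else 0) + bk u ⟨ℓ, hl⟩ := by
  have key : ∀ k : Fin L, (if (k : ℕ) < ℓ + 1 then bk u k else 0)
      = (if (k : ℕ) < ℓ then bk u k else 0) + (if k = ⟨ℓ, hl⟩ then bk u k else 0) := by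
    intro k
    rcases eq_or_ne k ⟨ℓ, hl⟩ with rfl | hne
    · simp
    · have hkn : (k : ℕ) ≠ ℓ := fun hc => hne (Fin.ext hc)
      by_cases h2 : (k : ℕ) < ℓ
      · simp [h2, Nat.lt_succ_of_lt h2, hne]
      · have h3 : ¬ (k : ℕ) < ℓ + 1 := by omega
        simp [h2, h3, hne]
  rw [Finset.sum_congr rfl (fun k _ => key k), Finset.sum_add_distrib,
    Finset.sum_ite_eq' Finset.univ (⟨ℓ, hl⟩ : Fin L) (bk u)]
  simp

lemma feat_hasFDeriv {L p : ℕ} (φ : ℝ → ℝ) (h : ℝ) (hφ : SmoothApproxReLU φ h)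
    (x : Fin p → ℝ) (hx : enorm2 x = 1) (V : Params L p) (hM : 1 ≤ ‖V‖) :
    ∀ ℓ, ℓ ≤ L → ∃ D : Params L p →L[ℝ] (Fin p → ℝ),
      HasFDerivAt (fun w => feat φ w x ℓ) D V ∧
      enorm2 (feat φ V x ℓ) ≤ ‖V‖ ^ ℓ ∧
      ∀ u, enorm2 (D u) ≤ ‖V‖ ^ ℓ * ∑ k : Fin L, (if (k : ℕ) < ℓ then bk u k else 0) := by
  intro ℓ
  induction ℓ with
  | zero =>
    intro _
    refine ⟨0, hasFDerivAt_const x V, by simpa [feat] using hx.le, fun u => ?_⟩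
    have h0 : enorm2 ((0 : Params L p →L[ℝ] (Fin p → ℝ)) u) = 0 := by
      simp [enorm2]
    rw [h0]
    apply mul_nonneg (by positivity)
    exact Finset.sum_nonneg fun k _ => by split <;> simp [bk_nonneg]
  | succ ℓ ih =>
    intro hl1
    have hl : ℓ < L := hl1
    obtain ⟨D, hD, hF, hDu⟩ := ih (Nat.le_of_lt hl)
    set ℓ' : Fin L := ⟨ℓ, hl⟩ with hℓ'
    set F : Fin p → ℝ := feat φ V x ℓ with hFdef
    set A : Matrix (Fin p) (Fin p) ℝ := layerMat V ℓ' with hA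
    set z : Fin p → ℝ := A.mulVec F with hz
    set Gi : Fin p → (Params L p →L[ℝ] ℝ) := fun i =>
      ∑ j, (V (Sum.inl (ℓ', i, j)) •
          ((ContinuousLinearMap.proj j : (Fin p → ℝ) →L[ℝ] ℝ).comp D)
        + F j • (EuclideanSpace.proj (Sum.inl (ℓ', i, j)) : Params L p →L[ℝ] ℝ)) with hGi
    have hco : ∀ i : Fin p,
        HasFDerivAt (fun w : Params L p => ((layerMat w ℓ').mulVec (feat φ w x ℓ)) i)
          (Gi i) V := by
      intro i
      have hrw : (fun w : Params L p => ((layerMat w ℓ').mulVec (feat φ w x ℓ)) i)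
          = fun w => ∑ j, w (Sum.inl (ℓ', i, j)) * feat φ w x ℓ j := by
        funext w
        simp [Matrix.mulVec, dotProduct, layerMat]
      rw [hrw, hGi]
      apply HasFDerivAt.fun_sum
      intro j _
      have hw : HasFDerivAt (fun w : Params L p => w (Sum.inl (ℓ', i, j)))
          (EuclideanSpace.proj (Sum.inl (ℓ', i, j)) : Params L p →L[ℝ] ℝ) V :=
        (EuclideanSpace.proj (Sum.inl (ℓ', i, j)) : Params L p →L[ℝ] ℝ).hasFDerivAt
      have hfj : HasFDerivAt (fun w : Params L p => feat φ w x ℓ j)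
          ((ContinuousLinearMap.proj j : (Fin p → ℝ) →L[ℝ] ℝ).comp D) V :=
        hasFDerivAt_pi'.1 hD j
      exact hw.mul hfj
    have hout : ∀ i : Fin p,
        HasFDerivAt (fun w : Params L p => φ (((layerMat w ℓ').mulVec (feat φ w x ℓ)) i))
          (deriv φ (z i) • Gi i) V := fun i =>
      HasDerivAt.comp_hasFDerivAt V ((hφ.1 (z i)).hasDerivAt) (hco i)
    refine ⟨ContinuousLinearMap.pi (fun i => deriv φ (z i) • Gi i), ?_, ?_, ?_⟩
    · have hfun : (fun w : Params L p => feat φ w x (ℓ + 1))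
          = fun w i => φ (((layerMat w ℓ').mulVec (feat φ w x ℓ)) i) := by
        funext w
        simp [feat, hl]; rfl
      rw [hfun]
      exact hasFDerivAt_pi.2 hout
    · have hfeat : feat φ V x (ℓ + 1) = fun i => φ (z i) := by
        funext i
        simp [feat, hl, hz, hA, hFdef]; rfl
      rw [hfeat]
      have h1 : enorm2 (fun i => φ (z i)) ≤ enorm2 z :=
        enorm_mono _ _ fun i => phi_abs_le hφ (z i)
      have h2 : enorm2 z ≤ bk V ℓ' * enorm2 F := by
        rw [hz]
        have : Real.sqrt (∑ i, ∑ j, A i j ^ 2) = bk V ℓ' := by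
          rw [hA]; rfl
        simpa [this] using enorm_mulVec_le A F
      calc enorm2 (fun i => φ (z i)) ≤ bk V ℓ' * enorm2 F := h1.trans h2
        _ ≤ ‖V‖ * ‖V‖ ^ ℓ := by
            apply mul_le_mul (bk_le_norm V ℓ') hF (enorm_nonneg F) (norm_nonneg V)
        _ = ‖V‖ ^ (ℓ + 1) := by ring
    · intro u
      have happ : (ContinuousLinearMap.pi (fun i => deriv φ (z i) • Gi i)) u
          = fun i => deriv φ (z i) * (Gi i u) := by
        funext i; simp
      rw [happ]
      set U : Matrix (Fin p) (Fin p) ℝ := Matrix.of fun i j => u (Sum.inl (ℓ', i, j)) with hU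
      have hGiu : ∀ i, Gi i u = A.mulVec (D u) i + U.mulVec F i := by
        intro i
        rw [hGi]
        simp only [ContinuousLinearMap.sum_apply, ContinuousLinearMap.add_apply,
          ContinuousLinearMap.smul_apply, ContinuousLinearMap.comp_apply,
          ContinuousLinearMap.proj_apply, smul_eq_mul]
        rw [Finset.sum_add_distrib]
        congr 1
        exact Finset.sum_congr rfl fun j _ => mul_comm _ _
      have hstep1 : enorm2 (fun i => deriv φ (z i) * Gi i u) ≤ enorm2 (fun i => Gi i u) := by
        apply enorm_mono
        intro i
        rw [abs_mul]
        calc |deriv φ (z i)| * |Gi i u| ≤ 1 * |Gi i u| := by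
              apply mul_le_mul_of_nonneg_right (hφ.2.2.2.1 (z i)) (abs_nonneg _)
          _ = |Gi i u| := one_mul _
      have hstep2 : enorm2 (fun i => Gi i u) ≤ enorm2 (A.mulVec (D u)) + enorm2 (U.mulVec F) := by
        have : (fun i => Gi i u) = fun i => A.mulVec (D u) i + U.mulVec F i := funext hGiu
        rw [this]
        exact enorm_add_le _ _
      have hfrobA : Real.sqrt (∑ i, ∑ j, A i j ^ 2) = bk V ℓ' := by rw [hA]; rfl
      have hfrobU : Real.sqrt (∑ i, ∑ j, U i j ^ 2) = bk u ℓ' := by rw [hU]; rfl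
      have h3 : enorm2 (A.mulVec (D u)) ≤ ‖V‖ * enorm2 (D u) := by
        calc enorm2 (A.mulVec (D u)) ≤ Real.sqrt (∑ i, ∑ j, A i j ^ 2) * enorm2 (D u) :=
              enorm_mulVec_le A (D u)
          _ ≤ ‖V‖ * enorm2 (D u) := by
              rw [hfrobA]
              exact mul_le_mul_of_nonneg_right (bk_le_norm V ℓ') (enorm_nonneg _)
      have h4 : enorm2 (U.mulVec F) ≤ bk u ℓ' * ‖V‖ ^ ℓ := by
        calc enorm2 (U.mulVec F) ≤ Real.sqrt (∑ i, ∑ j, U i j ^ 2) * enorm2 F :=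
              enorm_mulVec_le U F
          _ ≤ bk u ℓ' * ‖V‖ ^ ℓ := by
              rw [hfrobU]
              exact mul_le_mul_of_nonneg_left hF (bk_nonneg u ℓ')
      have hpow : ‖V‖ ^ ℓ ≤ ‖V‖ ^ (ℓ + 1) :=
        pow_le_pow_right₀ hM (Nat.le_succ ℓ)
      calc enorm2 (fun i => deriv φ (z i) * Gi i u)
          ≤ enorm2 (A.mulVec (D u)) + enorm2 (U.mulVec F) := hstep1.trans hstep2
        _ ≤ ‖V‖ * enorm2 (D u) + bk u ℓ' * ‖V‖ ^ ℓ := add_le_add h3 h4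
        _ ≤ ‖V‖ * (‖V‖ ^ ℓ * ∑ k : Fin L, (if (k : ℕ) < ℓ then bk u k else 0))
              + bk u ℓ' * ‖V‖ ^ (ℓ + 1) := by
            apply add_le_add
            · exact mul_le_mul_of_nonneg_left (hDu u) (by positivity)
            · exact mul_le_mul_of_nonneg_left hpow (bk_nonneg u ℓ')
        _ = ‖V‖ ^ (ℓ + 1) * ((∑ k : Fin L, (if (k : ℕ) < ℓ then bk u k else 0)) + bk u ℓ') := by
            ring
        _ = ‖V‖ ^ (ℓ + 1) * ∑ k : Fin L, (if (k : ℕ) < ℓ + 1 then bk u k else 0) := by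
            rw [sum_ite_succ u ℓ hl]

end Stmt3

namespace Stmt3

lemma netOut_hasFDeriv {L p : ℕ} (φ : ℝ → ℝ) (h : ℝ) (hφ : SmoothApproxReLU φ h)
    (x : Fin p → ℝ) (hx : enorm2 x = 1) (V : Params L p) (hM : 1 ≤ ‖V‖) :
    ∃ G : Params L p →L[ℝ] ℝ,
      HasFDerivAt (fun w => netOut φ w x) G V ∧ ∀ u, |G u| ≤ ‖V‖ ^ (L + 1) * S u := by
  obtain ⟨D, hD, hF, hDu⟩ := feat_hasFDeriv φ h hφ x hx V hM L le_rfl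
  set F : Fin p → ℝ := feat φ V x L with hFdef
  refine ⟨∑ j, (V (Sum.inr j) • ((ContinuousLinearMap.proj j : (Fin p → ℝ) →L[ℝ] ℝ).comp D)
      + F j • (EuclideanSpace.proj (Sum.inr j) : Params L p →L[ℝ] ℝ)), ?_, ?_⟩
  · have hrw : (fun w : Params L p => netOut φ w x)
        = fun w => ∑ j, w (Sum.inr j) * feat φ w x L j := by
      funext w; simp [netOut, outVec]
    rw [hrw]
    apply HasFDerivAt.fun_sum
    intro j _
    exact ((EuclideanSpace.proj (Sum.inr j) : Params L p →L[ℝ] ℝ).hasFDerivAt).mul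
      (hasFDerivAt_pi'.1 hD j)
  · intro u
    have happ : (∑ j, (V (Sum.inr j) • ((ContinuousLinearMap.proj j :
          (Fin p → ℝ) →L[ℝ] ℝ).comp D)
        + F j • (EuclideanSpace.proj (Sum.inr j) : Params L p →L[ℝ] ℝ))) u
        = (∑ j, V (Sum.inr j) * D u j) + ∑ j, F j * u (Sum.inr j) := by
      simp only [ContinuousLinearMap.sum_apply, ContinuousLinearMap.add_apply,
        ContinuousLinearMap.smul_apply, ContinuousLinearMap.comp_apply,
        ContinuousLinearMap.proj_apply, PiLp.proj_apply, smul_eq_mul]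
      rw [Finset.sum_add_distrib]
    rw [happ]
    have h1 : |∑ j, V (Sum.inr j) * D u j| ≤ bo V * enorm2 (D u) := by
      have := abs_sum_mul_le (fun j => V (Sum.inr j)) (D u)
      simpa [bo, enorm2] using this
    have h2 : |∑ j, F j * u (Sum.inr j)| ≤ enorm2 F * bo u := by
      have := abs_sum_mul_le F (fun j => u (Sum.inr j))
      simpa [bo, enorm2] using this
    have hsum_eq : (∑ k : Fin L, if (k : ℕ) < L then bk u k else 0) = ∑ k, bk u k :=
      Finset.sum_congr rfl fun k _ => by simp [k.isLt]
    have hDu' : enorm2 (D u) ≤ ‖V‖ ^ L * ∑ k, bk u k := by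
      have := hDu u; rwa [hsum_eq] at this
    have hbkle : (0:ℝ) ≤ ∑ k, bk u k := Finset.sum_nonneg fun k _ => bk_nonneg u k
    calc |(∑ j, V (Sum.inr j) * D u j) + ∑ j, F j * u (Sum.inr j)|
        ≤ |∑ j, V (Sum.inr j) * D u j| + |∑ j, F j * u (Sum.inr j)| := abs_add_le _ _
      _ ≤ bo V * enorm2 (D u) + enorm2 F * bo u := add_le_add h1 h2
      _ ≤ ‖V‖ * (‖V‖ ^ L * ∑ k, bk u k) + ‖V‖ ^ L * bo u := by
          apply add_le_add
          · exact mul_le_mul (bo_le_norm V) hDu' (enorm_nonneg _)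
              (norm_nonneg V)
          · exact mul_le_mul_of_nonneg_right hF (bo_nonneg u)
      _ ≤ ‖V‖ ^ (L + 1) * ∑ k, bk u k + ‖V‖ ^ (L + 1) * bo u := by
          apply add_le_add
          · apply le_of_eq; ring
          · apply mul_le_mul_of_nonneg_right _ (bo_nonneg u)
            exact pow_le_pow_right₀ hM (Nat.le_succ L)
      _ = ‖V‖ ^ (L + 1) * S u := by rw [S]; ring

lemma sigma_le_log {E : ℝ} (hE : 0 < E) : E / (1 + E) ≤ Real.log (1 + E) := by
  have hpos : (0:ℝ) < 1 + E := by linarith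
  have h1 : Real.log ((1 + E)⁻¹) ≤ (1 + E)⁻¹ - 1 :=
    Real.log_le_sub_one_of_pos (by positivity)
  rw [Real.log_inv] at h1
  have h2 : 1 - (1 + E)⁻¹ ≤ Real.log (1 + E) := by linarith
  have h3 : E / (1 + E) = 1 - (1 + E)⁻¹ := by field_simp; ring
  linarith [h3 ▸ h2, le_of_eq h3]

end Stmt3


/-- Lemma `l:gradient_norm.upper`: an upper bound on the norm of the
gradient of the training loss. -/
theorem statement3
    (L p n : ℕ) (hL : 1 ≤ L) (hn : 1 ≤ n) (hp : 1 ≤ p)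
    (φ : ℝ → ℝ) (h : ℝ) (hh0 : 0 < h) (hφ : SmoothApproxReLU φ h)
    (x : Fin n → Fin p → ℝ) (y : Fin n → ℝ)
    (hx : ∀ s, enorm2 (x s) = 1) (hy : ∀ s, y s = 1 ∨ y s = -1)
    (V : Params L p) (hV : Real.sqrt ((L : ℝ) + 1 / 2) ≤ ‖V‖) :
    ‖gradient (loss φ x y) V‖ ≤
      Real.sqrt (((L : ℝ) + 1) * p) * ‖V‖ ^ (L + 1) * min (loss φ x y V) 1 :=
  by
  classical
  have hL1 : (1:ℝ) ≤ (L:ℝ) := by exact_mod_cast hL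
  have hM1 : (1:ℝ) ≤ ‖V‖ := by
    refine le_trans ?_ hV
    have h1 : Real.sqrt 1 ≤ Real.sqrt ((L:ℝ) + 1/2) := Real.sqrt_le_sqrt (by linarith)
    simpa using h1
  -- nonnegativity of each per-sample loss
  have hls0 : ∀ s, 0 ≤ lossS φ (x s) (y s) V := by
    intro s
    have hrw : lossS φ (x s) (y s) V
        = Real.log (1 + Real.exp (-(y s * netOut φ V (x s)))) := rfl
    rw [hrw]
    apply Real.log_nonneg
    linarith [Real.exp_pos (-(y s * netOut φ V (x s)))]
  have hJ0 : 0 ≤ loss φ x y V := by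
    rw [show loss φ x y V = (1/(n:ℝ)) * ∑ s, lossS φ (x s) (y s) V from rfl]
    exact mul_nonneg (by positivity) (Finset.sum_nonneg fun s _ => hls0 s)
  -- per-sample derivative of the loss
  have key : ∀ s : Fin n, ∃ Ds : Params L p →L[ℝ] ℝ,
      HasFDerivAt (lossS φ (x s) (y s)) Ds V ∧
      ∀ u, |Ds u| ≤ min (lossS φ (x s) (y s) V) 1 * (‖V‖ ^ (L+1) * Stmt3.S u) := by
    intro s
    obtain ⟨G, hG, hGb⟩ := Stmt3.netOut_hasFDeriv φ h hφ (x s) (hx s) V hM1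
    set f : ℝ := netOut φ V (x s) with hf
    set E : ℝ := Real.exp (-(y s * f)) with hE
    have hEpos : 0 < E := Real.exp_pos _
    have h1pE : (0:ℝ) < 1 + E := by linarith
    have hinner : HasDerivAt (fun t : ℝ => -(y s * t)) (-(y s)) f := by
      exact ((hasDerivAt_id f).const_mul (y s)).neg.congr_deriv (by ring)
    have hexp := hinner.exp
    have hlog := (hexp.const_add 1).log (ne_of_gt h1pE)
    have hDs := hlog.comp_hasFDerivAt V hG
    have hfunrw : ((fun t : ℝ => Real.log (1 + Real.exp (-(y s * t))))
        ∘ (fun w : Params L p => netOut φ w (x s))) = lossS φ (x s) (y s) := rfl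
    rw [hfunrw] at hDs
    have hy1 : |y s| = 1 := by rcases hy s with h' | h' <;> simp [h']
    have habs : |E * -(y s) / (1 + E)| = E / (1 + E) := by
      rw [abs_div, abs_mul, abs_neg, hy1, abs_of_pos hEpos, abs_of_pos h1pE, mul_one]
    have hd1 : E / (1 + E) ≤ 1 := by rw [div_le_one h1pE]; linarith
    have hd2 : E / (1 + E) ≤ lossS φ (x s) (y s) V := by
      have := Stmt3.sigma_le_log hEpos
      have hrw : lossS φ (x s) (y s) V = Real.log (1 + E) := rfl
      rw [hrw]
      exact this
    refine ⟨_, hDs, fun u => ?_⟩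
    rw [ContinuousLinearMap.smul_apply, smul_eq_mul, abs_mul, habs]
    apply mul_le_mul (le_min hd2 hd1) (hGb u) (abs_nonneg _)
      (le_min (hls0 s) zero_le_one)
  choose Ds hDs hDb using key
  have hsum : HasFDerivAt (fun w => ∑ s, lossS φ (x s) (y s) w) (∑ s, Ds s) V :=
    HasFDerivAt.fun_sum fun s _ => hDs s
  have htot : HasFDerivAt (loss φ x y) ((1 / (n:ℝ)) • ∑ s, Ds s) V := by
    have := hsum.const_mul (1 / (n:ℝ))
    exact this
  have hgradeq : ‖gradient (loss φ x y) V‖ = ‖(1 / (n:ℝ)) • ∑ s, Ds s‖ := by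
    have h1 : gradient (loss φ x y) V
        = (InnerProductSpace.toDual ℝ (Params L p)).symm (fderiv ℝ (loss φ x y) V) := rfl
    rw [h1, htot.fderiv]
    exact LinearIsometryEquiv.norm_map _ _
  have hnne : (0:ℝ) < (n:ℝ) := by exact_mod_cast hn
  have hop : ‖(1 / (n:ℝ)) • ∑ s, Ds s‖ ≤
      min (loss φ x y V) 1 * (Real.sqrt ((L:ℝ) + 1) * ‖V‖ ^ (L + 1)) := by
    apply ContinuousLinearMap.opNorm_le_bound
    · exact mul_nonneg (le_min hJ0 zero_le_one) (by positivity)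
    · intro u
      have happ : ((1 / (n:ℝ)) • ∑ s, Ds s) u = (1/(n:ℝ)) * ∑ s, Ds s u := by
        simp [ContinuousLinearMap.sum_apply]
      rw [happ, Real.norm_eq_abs, abs_mul, abs_of_nonneg (by positivity : (0:ℝ) ≤ 1/(n:ℝ))]
      have hSu : Stmt3.S u ≤ Real.sqrt ((L:ℝ) + 1) * ‖u‖ := Stmt3.S_le u
      set C : ℝ := ‖V‖ ^ (L + 1) * (Real.sqrt ((L:ℝ) + 1) * ‖u‖) with hC
      have hC0 : 0 ≤ C := by positivity
      have hterm : ∀ s, |Ds s u| ≤ min (lossS φ (x s) (y s) V) 1 * C := by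
        intro s
        refine le_trans (hDb s u) ?_
        apply mul_le_mul_of_nonneg_left _ (le_min (hls0 s) zero_le_one)
        rw [hC]
        exact mul_le_mul_of_nonneg_left hSu (by positivity)
      calc (1/(n:ℝ)) * |∑ s, Ds s u|
          ≤ (1/(n:ℝ)) * ∑ s, |Ds s u| := by
            apply mul_le_mul_of_nonneg_left (Finset.abs_sum_le_sum_abs _ _) (by positivity)
        _ ≤ (1/(n:ℝ)) * ∑ s, min (lossS φ (x s) (y s) V) 1 * C := by
            apply mul_le_mul_of_nonneg_left (Finset.sum_le_sum fun s _ => hterm s)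
              (by positivity)
        _ = ((1/(n:ℝ)) * ∑ s, min (lossS φ (x s) (y s) V) 1) * C := by
            rw [← Finset.sum_mul]; ring
        _ ≤ min (loss φ x y V) 1 * C := by
            apply mul_le_mul_of_nonneg_right _ hC0
            apply le_min
            · have : ∑ s, min (lossS φ (x s) (y s) V) 1 ≤ ∑ s, lossS φ (x s) (y s) V :=
                Finset.sum_le_sum fun s _ => min_le_left _ _
              have h2 : loss φ x y V = (1/(n:ℝ)) * ∑ s, lossS φ (x s) (y s) V := rfl
              rw [h2]
              exact mul_le_mul_of_nonneg_left this (by positivity)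
            · have : ∑ s, min (lossS φ (x s) (y s) V) 1 ≤ ∑ _s : Fin n, (1:ℝ) :=
                Finset.sum_le_sum fun s _ => min_le_right _ _
              have h2 : ∑ _s : Fin n, (1:ℝ) = (n:ℝ) := by simp
              calc (1/(n:ℝ)) * ∑ s, min (lossS φ (x s) (y s) V) 1
                  ≤ (1/(n:ℝ)) * (n:ℝ) := by
                    apply mul_le_mul_of_nonneg_left (this.trans h2.le) (by positivity)
                _ = 1 := by field_simp
        _ = min (loss φ x y V) 1 * (Real.sqrt ((L:ℝ) + 1) * ‖V‖ ^ (L + 1)) * ‖u‖ := by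
            rw [hC]; ring
  have hsqrt : Real.sqrt ((L:ℝ) + 1) ≤ Real.sqrt (((L:ℝ) + 1) * p) := by
    apply Real.sqrt_le_sqrt
    have hp1 : (1:ℝ) ≤ (p:ℝ) := by exact_mod_cast hp
    nlinarith
  calc ‖gradient (loss φ x y) V‖ = ‖(1 / (n:ℝ)) • ∑ s, Ds s‖ := hgradeq
    _ ≤ min (loss φ x y V) 1 * (Real.sqrt ((L:ℝ) + 1) * ‖V‖ ^ (L + 1)) := hop
    _ ≤ min (loss φ x y V) 1 * (Real.sqrt (((L:ℝ) + 1) * p) * ‖V‖ ^ (L + 1)) := by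
        apply mul_le_mul_of_nonneg_left _ (le_min hJ0 zero_le_one)
        exact mul_le_mul_of_nonneg_right hsqrt (by positivity)
    _ = Real.sqrt (((L:ℝ) + 1) * p) * ‖V‖ ^ (L + 1) * min (loss φ x y V) 1 := by ring
end
end

section
/- Suppose L ≥ 1, n ≥ 3, and the activation is h-smoothly approximately ReLU (for some h > 0). For any weights V, if the training loss satisfies J(V) ≤ 2/n^{1+24L}, then ‖V‖ > √(L+1) (and in particular ‖V‖ ≥ √2). -/
open scoped BigOperators
noncomputable section

def enorm₂ {p : ℕ} (v : Fin p → ℝ) : ℝ := Real.sqrt (∑ i, v i ^ 2)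

/-- Lemma `l:aux.lower.bound.norm.weight.vector`: a small training loss
forces the collective weight norm to be large. -/
theorem statement10
    (L p n : ℕ) (hL : 1 ≤ L) (hn : 3 ≤ n) (hp : 1 ≤ p)
    (φ : ℝ → ℝ) (h : ℝ) (hh0 : 0 < h) (hφ : SmoothApproxReLU φ h)
    (x : Fin n → Fin p → ℝ) (y : Fin n → ℝ)
    (hx : ∀ s, enorm₂ (x s) = 1) (hy : ∀ s, y s = 1 ∨ y s = -1)
    (V : Params L p)
    (hJ : loss φ x y V ≤ 2 / (n : ℝ) ^ (1 + 24 * L)) :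
    Real.sqrt ((L : ℝ) + 1) < ‖V‖ ∧ Real.sqrt 2 ≤ ‖V‖ := by
  obtain ⟨hdiff, hφ0, -, hderiv, -⟩ := hφ
  have hlip : LipschitzWith 1 φ :=
    lipschitzWith_of_nnnorm_deriv_le hdiff fun z => by
      rw [← NNReal.coe_le_coe]
      simpa [Real.norm_eq_abs] using hderiv z
  have hφabs : ∀ z : ℝ, |φ z| ≤ |z| := by
    intro z
    have := hlip.dist_le_mul z 0
    simpa [hφ0, Real.dist_eq] using this
  have hmain : Real.sqrt ((L : ℝ) + 1) < ‖V‖ := by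
    by_contra hcon
    push_neg at hcon
    have hL1 : (0:ℝ) ≤ (L:ℝ) + 1 := by positivity
    have hV2 : ‖V‖ ^ 2 ≤ (L : ℝ) + 1 := by
      have h1 : ‖V‖ ^ 2 ≤ Real.sqrt ((L:ℝ)+1) ^ 2 :=
        pow_le_pow_left₀ (norm_nonneg V) hcon 2
      rwa [Real.sq_sqrt hL1] at h1
    set A : ℕ → ℝ := fun k =>
      if hk : k < L then ∑ i, ∑ j, layerMat V ⟨k, hk⟩ i j ^ 2 else 1 with hAdef
    set B : ℝ := ∑ j, outVec V j ^ 2 with hBdef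
    have hA0 : ∀ k, 0 ≤ A k := by
      intro k
      by_cases hk : k < L
      · simp only [hAdef, dif_pos hk]; positivity
      · simp only [hAdef, dif_neg hk]; norm_num
    have hB0 : 0 ≤ B := by
      rw [hBdef]; positivity
    have hnormsum : (∑ k ∈ Finset.range L, A k) + B = ‖V‖ ^ 2 := by
      rw [EuclideanSpace.norm_eq,
        Real.sq_sqrt (Finset.sum_nonneg fun i _ => sq_nonneg _)]
      rw [Fintype.sum_sum_type]
      congr 1
      swap
      · simp [hBdef, outVec, Real.norm_eq_abs, sq_abs]
      rw [← Fin.sum_univ_eq_sum_range A L]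
      rw [Fintype.sum_prod_type]
      refine Finset.sum_congr rfl fun ℓ _ => ?_
      simp only [hAdef, dif_pos ℓ.isLt, Fin.eta, layerMat, Matrix.of_apply,
        Real.norm_eq_abs, sq_abs, Fintype.sum_prod_type]
    have hfeat : ∀ s : Fin n, ∀ k, k ≤ L →
        (∑ i, feat φ V (x s) k i ^ 2) ≤ ∏ m ∈ Finset.range k, A m := by
      intro s k
      induction k with
      | zero =>
        intro _
        have h3 : (0:ℝ) ≤ ∑ i, x s i ^ 2 := Finset.sum_nonneg fun i _ => sq_nonneg _
        have h1 : (∑ i, x s i ^ 2) = 1 := by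
          have h2 := hx s
          rw [enorm₂] at h2
          nlinarith [Real.sq_sqrt h3]
        simp [feat, h1]
      | succ k ih =>
        intro hk1
        have hkL : k < L := hk1
        have ihk := ih (le_of_lt hkL)
        have hfe : feat φ V (x s) (k+1) =
            fun i => φ ((layerMat V ⟨k, hkL⟩).mulVec (feat φ V (x s) k) i) := by
          rw [feat, dif_pos hkL]
        have hstep : (∑ i, feat φ V (x s) (k+1) i ^ 2) ≤
            A k * ∑ i, feat φ V (x s) k i ^ 2 := by
          rw [hfe]
          calc ∑ i, φ ((layerMat V ⟨k, hkL⟩).mulVec (feat φ V (x s) k) i) ^ 2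
              ≤ ∑ i, ((layerMat V ⟨k, hkL⟩).mulVec (feat φ V (x s) k) i) ^ 2 := by
                refine Finset.sum_le_sum fun i _ => ?_
                have h4 := hφabs ((layerMat V ⟨k, hkL⟩).mulVec (feat φ V (x s) k) i)
                calc φ ((layerMat V ⟨k, hkL⟩).mulVec (feat φ V (x s) k) i) ^ 2
                    = |φ ((layerMat V ⟨k, hkL⟩).mulVec (feat φ V (x s) k) i)| ^ 2 :=
                      (sq_abs _).symm
                  _ ≤ |((layerMat V ⟨k, hkL⟩).mulVec (feat φ V (x s) k) i)| ^ 2 :=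
                      pow_le_pow_left₀ (abs_nonneg _) h4 2
                  _ = _ := sq_abs _
            _ ≤ ∑ i, (∑ j, layerMat V ⟨k, hkL⟩ i j ^ 2) *
                  (∑ j, feat φ V (x s) k j ^ 2) := by
                refine Finset.sum_le_sum fun i _ => ?_
                simp only [Matrix.mulVec, dotProduct]
                exact Finset.sum_mul_sq_le_sq_mul_sq _ _ _
            _ = A k * ∑ i, feat φ V (x s) k i ^ 2 := by
                rw [← Finset.sum_mul]
                simp only [hAdef, dif_pos hkL]
        calc (∑ i, feat φ V (x s) (k+1) i ^ 2)
            ≤ A k * ∑ i, feat φ V (x s) k i ^ 2 := hstep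
          _ ≤ A k * ∏ m ∈ Finset.range k, A m :=
              mul_le_mul_of_nonneg_left ihk (hA0 k)
          _ = ∏ m ∈ Finset.range (k+1), A m := by
              rw [Finset.prod_range_succ, mul_comm]
    have hexp1 : B * ∏ m ∈ Finset.range L, A m ≤ 1 := by
      have hle : ∀ t : ℝ, t ≤ Real.exp (t - 1) := fun t => by
        have := Real.add_one_le_exp (t - 1); linarith
      have h1 : (∏ m ∈ Finset.range L, A m) ≤
          ∏ m ∈ Finset.range L, Real.exp (A m - 1) :=
        Finset.prod_le_prod (fun m _ => hA0 m) (fun m _ => hle (A m))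
      have h2 : B * ∏ m ∈ Finset.range L, A m ≤
          Real.exp (B - 1) * ∏ m ∈ Finset.range L, Real.exp (A m - 1) :=
        mul_le_mul (hle B) h1 (Finset.prod_nonneg fun m _ => hA0 m) (Real.exp_nonneg _)
      rw [← Real.exp_sum, ← Real.exp_add] at h2
      have h3 : B - 1 + ∑ m ∈ Finset.range L, (A m - 1) ≤ 0 := by
        rw [Finset.sum_sub_distrib, Finset.sum_const, Finset.card_range]
        have := hnormsum
        simp only [nsmul_eq_mul, mul_one]
        linarith
      calc B * ∏ m ∈ Finset.range L, A m
          ≤ Real.exp (B - 1 + ∑ m ∈ Finset.range L, (A m - 1)) := h2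
        _ ≤ Real.exp 0 := Real.exp_le_exp.mpr h3
        _ = 1 := Real.exp_zero
    have hnet1 : ∀ s, netOut φ V (x s) ^ 2 ≤ 1 := by
      intro s
      have h1 := Finset.sum_mul_sq_le_sq_mul_sq Finset.univ (outVec V) (feat φ V (x s) L)
      calc netOut φ V (x s) ^ 2
          ≤ B * ∑ i, feat φ V (x s) L i ^ 2 := h1
        _ ≤ B * ∏ m ∈ Finset.range L, A m :=
            mul_le_mul_of_nonneg_left (hfeat s L le_rfl) hB0
        _ ≤ 1 := hexp1
    set c : ℝ := Real.log (1 + Real.exp (-(1:ℝ))) with hcdef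
    have hlossS : ∀ s, c ≤ lossS φ (x s) (y s) V := by
      intro s
      have hne : -(y s * netOut φ V (x s)) ≤ 1 := by
        rcases hy s with h1 | h1 <;> rw [h1] <;> nlinarith [hnet1 s]
      have hne' : -(1:ℝ) ≤ -(y s * netOut φ V (x s)) := by
        rcases hy s with h1 | h1 <;> rw [h1] <;> nlinarith [hnet1 s]
      have h2 : Real.exp (-(1:ℝ)) ≤ Real.exp (-(y s * netOut φ V (x s))) :=
        Real.exp_le_exp.mpr hne'
      have hpos : (0:ℝ) < 1 + Real.exp (-(1:ℝ)) := by positivity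
      rw [hcdef]
      unfold lossS
      exact Real.log_le_log hpos (by linarith)
    have hn0 : (0:ℝ) < (n:ℝ) := by
      have : (3:ℝ) ≤ (n:ℝ) := by exact_mod_cast hn
      linarith
    have hloss : c ≤ loss φ x y V := by
      unfold loss
      have hsum : (n:ℝ) * c ≤ ∑ s, lossS φ (x s) (y s) V := by
        calc (n:ℝ) * c = ∑ _s : Fin n, c := by
              rw [Finset.sum_const, Finset.card_univ, Fintype.card_fin,
                nsmul_eq_mul]
          _ ≤ ∑ s, lossS φ (x s) (y s) V :=
              Finset.sum_le_sum fun s _ => hlossS s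
      rw [one_div, ← div_eq_inv_mul, le_div_iff₀ hn0]
      linarith
    have hc : (1:ℝ)/4 ≤ c := by
      have he3 : Real.exp 1 < 3 := by
        have := Real.exp_one_lt_d9
        linarith
      have hinv : (1:ℝ)/3 < Real.exp (-(1:ℝ)) := by
        rw [Real.exp_neg]
        rw [div_lt_iff₀ (by norm_num : (0:ℝ) < 3)]
        rw [inv_mul_eq_div, lt_div_iff₀ (Real.exp_pos 1)]
        linarith
      have h43 : (4:ℝ)/3 ≤ 1 + Real.exp (-(1:ℝ)) := by linarith
      have h34 : Real.log (3/4) ≤ 3/4 - 1 :=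
        Real.log_le_sub_one_of_pos (by norm_num)
      have hlog43 : Real.log (4/3) = - Real.log (3/4) := by
        rw [← Real.log_inv]; norm_num
      have hlog : (1:ℝ)/4 ≤ Real.log (4/3) := by
        rw [hlog43]; linarith
      calc (1:ℝ)/4 ≤ Real.log (4/3) := hlog
        _ ≤ c := Real.log_le_log (by norm_num) h43
    have hpow : (27:ℝ) ≤ (n:ℝ) ^ (1 + 24*L) := by
      have h3n : (3:ℝ) ≤ (n:ℝ) := by exact_mod_cast hn
      have h1 : (3:ℝ)^3 ≤ (3:ℝ)^(1+24*L) :=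
        pow_le_pow_right₀ (by norm_num) (by omega)
      have h2 : (3:ℝ)^(1+24*L) ≤ (n:ℝ)^(1+24*L) :=
        pow_le_pow_left₀ (by norm_num) h3n _
      calc (27:ℝ) = 3^3 := by norm_num
        _ ≤ _ := h1.trans h2
    have hsmall : 2 / (n:ℝ)^(1+24*L) ≤ 2/27 := by
      apply div_le_div_of_nonneg_left (by norm_num) (by norm_num) hpow
    linarith
  refine ⟨hmain, ?_⟩
  have h2L : (2:ℝ) ≤ (L:ℝ) + 1 := by
    have : (1:ℝ) ≤ (L:ℝ) := by exact_mod_cast hL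
    linarith
  have := Real.sqrt_le_sqrt h2L
  linarith
end
end

section
/- For integers 1 ≤ k ≤ p, let S ⊆ ℝ^p be the set of k-sparse unit vectors (vectors with at most k nonzero coordinates and Euclidean norm 1). There exist a finite set N of k-sparse unit vectors in ℝ^p with |N| ≤ C(p,k)·9^k (where C(p,k) is the binomial coefficient) and a map ζ : S → N such that for every s ∈ S, ‖s − ζ(s)‖ ≤ 1/4 and the vector s − ζ(s) has at most k nonzero coordinates. -/
open scoped BigOperators
open Metric MeasureTheory Set Module
open scoped ENNReal
open Metric MeasureTheory Set Module
open scoped ENNReal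

/-- Packing bound: a `1/4`-separated subset of the unit ball has at most `9^dim` points. -/
theorem pack_bound {E : Type*} [NormedAddCommGroup E] [NormedSpace ℝ E] [FiniteDimensional ℝ E]
    (s : Finset E) (hs : ∀ c ∈ s, ‖c‖ ≤ 1)
    (h : ∀ c ∈ s, ∀ d ∈ s, c ≠ d → 1/4 ≤ ‖c - d‖) : s.card ≤ 9 ^ finrank ℝ E := by
  borelize E
  let μ : Measure E := Measure.addHaar
  let δ : ℝ := (1 : ℝ) / 8
  let ρ : ℝ := (9 : ℝ) / 8
  have ρpos : 0 < ρ := by norm_num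
  set A := ⋃ c ∈ s, ball (c : E) δ with hA
  have D : Set.Pairwise (s : Set E) (Function.onFun Disjoint fun c => ball (c : E) δ) := by
    rintro c hc d hd hcd
    apply ball_disjoint_ball
    rw [dist_eq_norm]
    have := h c hc d hd hcd
    simp only [δ]
    linarith
  have A_subset : A ⊆ ball (0 : E) ρ := by
    refine iUnion₂_subset fun x hx => ?_
    apply ball_subset_ball'
    calc
      δ + dist x 0 ≤ δ + 1 := by rw [dist_zero_right]; exact add_le_add le_rfl (hs x hx)
      _ = 9 / 8 := by norm_num
  have I :
    (s.card : ℝ≥0∞) * ENNReal.ofReal (δ ^ finrank ℝ E) * μ (ball 0 1) ≤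
      ENNReal.ofReal (ρ ^ finrank ℝ E) * μ (ball 0 1) :=
    calc
      (s.card : ℝ≥0∞) * ENNReal.ofReal (δ ^ finrank ℝ E) * μ (ball 0 1) = μ A := by
        rw [hA, measure_biUnion_finset D fun c _ => measurableSet_ball]
        have I : 0 < δ := by norm_num
        simp only [div_pow, μ.addHaar_ball_of_pos _ I]
        simp only [δ, one_div, one_pow, Finset.sum_const, nsmul_eq_mul, mul_assoc]
      _ ≤ μ (ball (0 : E) ρ) := measure_mono A_subset
      _ = ENNReal.ofReal (ρ ^ finrank ℝ E) * μ (ball 0 1) := by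
        simp only [μ.addHaar_ball_of_pos _ ρpos]
  have J : (s.card : ℝ≥0∞) * ENNReal.ofReal (δ ^ finrank ℝ E) ≤ ENNReal.ofReal (ρ ^ finrank ℝ E) :=
    (ENNReal.mul_le_mul_iff_left (measure_ball_pos _ _ zero_lt_one).ne' measure_ball_lt_top.ne).1 I
  have K : (s.card : ℝ) ≤ (9 : ℝ) ^ finrank ℝ E := by
    have := ENNReal.toReal_le_of_le_ofReal (pow_nonneg ρpos.le _) J
    simpa [ρ, δ, div_eq_mul_inv, mul_pow] using this
  exact mod_cast K

theorem net_exists (E : Type*) [NormedAddCommGroup E] [NormedSpace ℝ E] [FiniteDimensional ℝ E] :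
    ∃ N : Finset E, N.card ≤ 9 ^ finrank ℝ E ∧ (∀ v ∈ N, ‖v‖ = 1) ∧
      ∀ x : E, ‖x‖ = 1 → ∃ y ∈ N, ‖x - y‖ ≤ 1/4 := by
  classical
  set Q : Set ℕ := {n | ∃ s : Finset E, s.card = n ∧ (∀ c ∈ s, ‖c‖ = 1) ∧
      ∀ c ∈ s, ∀ d ∈ s, c ≠ d → 1/4 ≤ ‖c - d‖} with hQ
  have hne : Q.Nonempty := ⟨0, ∅, by simp⟩
  have hbdd : BddAbove Q := by
    refine ⟨9 ^ finrank ℝ E, ?_⟩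
    rintro n ⟨s, rfl, h1, h2⟩
    exact pack_bound s (fun c hc => (h1 c hc).le) h2
  obtain ⟨s, hcard, h1, h2⟩ := Nat.sSup_mem hne hbdd
  have hsup : sSup Q ≤ 9 ^ finrank ℝ E := by
    refine csSup_le hne ?_
    rintro n ⟨t, rfl, t1, t2⟩
    exact pack_bound t (fun c hc => (t1 c hc).le) t2
  refine ⟨s, by rw [hcard]; exact hsup, h1, ?_⟩
  intro x hx
  by_contra hcon
  push_neg at hcon
  have hxs : x ∉ s := fun hxs => by
    have := hcon x hxs
    simp at this; linarith
  have hins : sSup Q + 1 ∈ Q := by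
    refine ⟨insert x s, by rw [Finset.card_insert_of_notMem hxs, hcard], ?_, ?_⟩
    · intro c hc
      rcases Finset.mem_insert.1 hc with rfl | hc
      · exact hx
      · exact h1 c hc
    · intro c hc d hd hcd
      rcases Finset.mem_insert.1 hc with hc' | hc' <;>
        rcases Finset.mem_insert.1 hd with hd' | hd'
      · exact absurd (hc'.trans hd'.symm) hcd
      · subst hc'; exact (hcon d hd').le
      · subst hd'; rw [← norm_neg]; simpa using (hcon c hc').le
      · exact h2 c hc' d hd' hcd
  have := le_csSup hbdd hins
  omega


noncomputable def embFun {k p : ℕ} (f : Fin k → Fin p) (x : EuclideanSpace ℝ (Fin k)) :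
    EuclideanSpace ℝ (Fin p) := WithLp.toLp 2 (fun i => if h : ∃ j, f j = i then x h.choose else 0)

theorem embFun_apply {k p : ℕ} {f : Fin k → Fin p} (hf : Function.Injective f)
    (x : EuclideanSpace ℝ (Fin k)) (j : Fin k) : embFun f x (f j) = x j := by
  have h : ∃ j', f j' = f j := ⟨j, rfl⟩
  simp only [embFun, dif_pos h]
  rw [hf h.choose_spec]

theorem embFun_apply_not {k p : ℕ} {f : Fin k → Fin p} (x : EuclideanSpace ℝ (Fin k))
    {i : Fin p} (hi : ¬ ∃ j, f j = i) : embFun f x i = 0 := by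
  simp only [embFun, dif_neg hi]

theorem embFun_sub {k p : ℕ} (f : Fin k → Fin p) (x y : EuclideanSpace ℝ (Fin k)) :
    embFun f x - embFun f y = embFun f (x - y) := by
  ext i
  show embFun f x i - embFun f y i = _
  by_cases h : ∃ j, f j = i
  · simp only [embFun, dif_pos h]
    rfl
  · simp [embFun, dif_neg h]

theorem embFun_norm {k p : ℕ} {f : Fin k → Fin p} (hf : Function.Injective f)
    (x : EuclideanSpace ℝ (Fin k)) : ‖embFun f x‖ = ‖x‖ := by
  rw [EuclideanSpace.norm_eq, EuclideanSpace.norm_eq]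
  congr 1
  have him : ∑ i ∈ Finset.univ.image f, ‖embFun f x i‖ ^ 2
      = ∑ j : Fin k, ‖embFun f x (f j)‖ ^ 2 :=
    Finset.sum_image (fun a _ b _ hab => hf hab)
  have hsub : ∑ i : Fin p, ‖embFun f x i‖ ^ 2
      = ∑ i ∈ Finset.univ.image f, ‖embFun f x i‖ ^ 2 := by
    refine (Finset.sum_subset (Finset.subset_univ _) ?_).symm
    intro i _ hi
    have : ¬ ∃ j, f j = i := by
      rintro ⟨j, rfl⟩
      exact hi (Finset.mem_image.2 ⟨j, Finset.mem_univ _, rfl⟩)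
    rw [embFun_apply_not x this]
    simp
  rw [hsub, him]
  exact Finset.sum_congr rfl fun j _ => by rw [embFun_apply hf]

theorem exists_good_fun {p k : ℕ} (T : Finset (Fin p)) (hT : T.card = k) :
    ∃ g : Fin k → Fin p, Function.Injective g ∧ (∀ j, g j ∈ T) ∧ ∀ i ∈ T, ∃ j, g j = i := by
  have e : ↥T ≃ Fin k := Fintype.equivFinOfCardEq (by rw [Fintype.card_coe, hT])
  refine ⟨fun j => (e.symm j : Fin p), ?_, fun j => (e.symm j).2, fun i hi => ⟨e ⟨i, hi⟩, by simp⟩⟩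
  intro a b hab
  exact e.symm.injective (Subtype.val_injective hab)

theorem statement12aux (p k : ℕ) (hk1 : 1 ≤ k) (hkp : k ≤ p) :
    ∃ (N : Finset (EuclideanSpace ℝ (Fin p)))
      (ζ : EuclideanSpace ℝ (Fin p) → EuclideanSpace ℝ (Fin p)),
      N.card ≤ Nat.choose p k * 9 ^ k ∧
      (∀ v ∈ N, ‖v‖ = 1 ∧ {i | v i ≠ 0}.ncard ≤ k) ∧
      (∀ s : EuclideanSpace ℝ (Fin p), ‖s‖ = 1 → {i | s i ≠ 0}.ncard ≤ k →
        ζ s ∈ N ∧ ‖s - ζ s‖ ≤ 1 / 4 ∧ {i | (s - ζ s) i ≠ 0}.ncard ≤ k) := by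
  classical
  obtain ⟨N0, hN0card, hN0norm, hN0net⟩ := net_exists (EuclideanSpace ℝ (Fin k))
  have hN0card' : N0.card ≤ 9 ^ k := by
    rwa [finrank_euclideanSpace_fin] at hN0card
  set P := (Finset.univ : Finset (Fin p)).powersetCard k with hP
  have hPmem : ∀ T ∈ P, T.card = k := fun T hT => (Finset.mem_powersetCard_univ.1 hT)
  set g : {T // T ∈ P} → (Fin k → Fin p) :=
    fun T => (exists_good_fun T.1 (hPmem T.1 T.2)).choose with hg
  have hgspec : ∀ T : {T // T ∈ P}, Function.Injective (g T) ∧ (∀ j, g T j ∈ T.1) ∧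
      ∀ i ∈ T.1, ∃ j, g T j = i := fun T => (exists_good_fun T.1 (hPmem T.1 T.2)).choose_spec
  set N : Finset (EuclideanSpace ℝ (Fin p)) :=
    P.attach.biUnion (fun T => N0.image (embFun (g T))) with hN
  -- support fact for elements of the image
  have hsupp : ∀ (T : {T // T ∈ P}) (z : EuclideanSpace ℝ (Fin k)),
      {i | embFun (g T) z i ≠ 0}.ncard ≤ k := by
    intro T z
    have hsub : {i | embFun (g T) z i ≠ 0} ⊆ (T.1 : Set (Fin p)) := by
      intro i hi
      by_contra hiT
      refine hi (embFun_apply_not z ?_)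
      rintro ⟨j, rfl⟩
      exact hiT ((hgspec T).2.1 j)
    calc {i | embFun (g T) z i ≠ 0}.ncard ≤ (T.1 : Set (Fin p)).ncard :=
          Set.ncard_le_ncard hsub (T.1.finite_toSet)
      _ = T.1.card := Set.ncard_coe_finset _
      _ = k := hPmem T.1 T.2
  have hNmem : ∀ v ∈ N, ‖v‖ = 1 ∧ {i | v i ≠ 0}.ncard ≤ k := by
    intro v hv
    obtain ⟨T, _, hv⟩ := Finset.mem_biUnion.1 hv
    obtain ⟨y, hy, rfl⟩ := Finset.mem_image.1 hv
    exact ⟨by rw [embFun_norm (hgspec T).1]; exact hN0norm y hy, hsupp T y⟩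
  have hNcard : N.card ≤ Nat.choose p k * 9 ^ k := by
    calc N.card ≤ ∑ T ∈ P.attach, (N0.image (embFun (g T))).card := Finset.card_biUnion_le
      _ ≤ ∑ _T ∈ P.attach, 9 ^ k := by
          refine Finset.sum_le_sum fun T _ => ?_
          exact le_trans (Finset.card_image_le) hN0card'
      _ = P.attach.card * 9 ^ k := by rw [Finset.sum_const, smul_eq_mul]
      _ = Nat.choose p k * 9 ^ k := by
          rw [Finset.card_attach, hP, Finset.card_powersetCard, Finset.card_univ,
            Fintype.card_fin]
  -- the net property
  have hnet : ∀ s : EuclideanSpace ℝ (Fin p), ‖s‖ = 1 → {i | s i ≠ 0}.ncard ≤ k →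
      ∃ z ∈ N, ‖s - z‖ ≤ 1 / 4 ∧ {i | (s - z) i ≠ 0}.ncard ≤ k := by
    intro s hs hsk
    have hfin : {i | s i ≠ 0}.Finite := Set.toFinite _
    set S0 := hfin.toFinset with hS0
    have hS0card : S0.card ≤ k := by
      rwa [hS0, ← Set.ncard_eq_toFinset_card]
    obtain ⟨T, hS0T, hTuniv, hTcard⟩ := Finset.exists_subsuperset_card_eq
      (Finset.subset_univ S0) hS0card (by rw [Finset.card_univ, Fintype.card_fin]; exact hkp)
    have hTP : T ∈ P := Finset.mem_powersetCard_univ.2 hTcard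
    set Tm : {T // T ∈ P} := ⟨T, hTP⟩ with hTm
    obtain ⟨hginj, hgmem, hgsurj⟩ := hgspec Tm
    set x : EuclideanSpace ℝ (Fin k) := WithLp.toLp 2 (fun j => s (g Tm j)) with hx
    have hembx : embFun (g Tm) x = s := by
      ext i
      by_cases h : ∃ j, g Tm j = i
      · obtain ⟨j, rfl⟩ := h
        rw [embFun_apply hginj]
      · rw [embFun_apply_not x h]
        by_contra hne
        have : i ∈ S0 := hfin.mem_toFinset.2 (fun hc => hne hc.symm)
        obtain ⟨j, hj⟩ := hgsurj i (hS0T this)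
        exact h ⟨j, hj⟩
    have hxnorm : ‖x‖ = 1 := by
      rw [← embFun_norm hginj, hembx]; exact hs
    obtain ⟨y, hy, hxy⟩ := hN0net x hxnorm
    refine ⟨embFun (g Tm) y, ?_, ?_, ?_⟩
    · exact Finset.mem_biUnion.2 ⟨Tm, Finset.mem_attach _ _,
        Finset.mem_image.2 ⟨y, hy, rfl⟩⟩
    · rw [← hembx, embFun_sub, embFun_norm hginj]
      exact hxy
    · rw [← hembx, embFun_sub]
      exact hsupp Tm (x - y)
  set ζ : EuclideanSpace ℝ (Fin p) → EuclideanSpace ℝ (Fin p) :=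
    fun s => if h : ‖s‖ = 1 ∧ {i | s i ≠ 0}.ncard ≤ k
      then (hnet s h.1 h.2).choose else s with hζ
  refine ⟨N, ζ, hNcard, hNmem, fun s hs hsk => ?_⟩
  have h : ‖s‖ = 1 ∧ {i | s i ≠ 0}.ncard ≤ k := ⟨hs, hsk⟩
  have := (hnet s h.1 h.2).choose_spec
  simp only [hζ, dif_pos h]
  exact ⟨this.1, this.2.1, this.2.2⟩

/-- Lemma `l:covering_numbers_sparse_vectors`: there is a `1/4`-net `N`
of the set of `k`-sparse unit vectors of `ℝ^p`, of cardinality at most `C(p,k)·9^k`,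
together with a map `ζ` sending every `k`-sparse unit vector `s` to a net point with
`‖s - ζ s‖ ≤ 1/4` and `s - ζ s` again `k`-sparse. -/
theorem statement12 (p k : ℕ) (hk1 : 1 ≤ k) (hkp : k ≤ p) :
    ∃ (N : Finset (EuclideanSpace ℝ (Fin p)))
      (ζ : EuclideanSpace ℝ (Fin p) → EuclideanSpace ℝ (Fin p)),
      N.card ≤ Nat.choose p k * 9 ^ k ∧
      (∀ v ∈ N, ‖v‖ = 1 ∧ {i | v i ≠ 0}.ncard ≤ k) ∧
      (∀ s : EuclideanSpace ℝ (Fin p), ‖s‖ = 1 → {i | s i ≠ 0}.ncard ≤ k →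
        ζ s ∈ N ∧ ‖s - ζ s‖ ≤ 1 / 4 ∧ {i | (s - ζ s) i ≠ 0}.ncard ≤ k) :=
  statement12aux p k hk1 hkp
end

section
/- Let the activation be h-smoothly approximately ReLU with h > 0. Let V = (V_1,…,V_{L+1}) and W = (W_1,…,W_{L+1}) be weight tuples and ℓ ∈ {1,…,L} such that V_j = W_j for all j ≠ ℓ, and suppose ‖V‖, ‖W‖ > √(L + 1/2). Then for every example s (with ‖x_s‖ = 1) and every layer j ∈ {1,…,L}: ‖Σ_{j,s}^V − Σ_{j,s}^W‖_op ≤ ‖V_ℓ − W_ℓ‖_op·‖V‖^{L+1} / h. -/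
open scoped BigOperators
noncomputable section

def enorm {p : ℕ} (v : Fin p → ℝ) : ℝ := Real.sqrt (∑ i, v i ^ 2)

/-- Operator (ℓ²→ℓ²) norm of a real matrix. -/
def opNorm {m k : ℕ} (A : Matrix (Fin m) (Fin k) ℝ) : ℝ :=
  ‖LinearMap.toContinuousLinearMap (Matrix.toEuclideanLin A)‖

/-- Outer-layer weights viewed as a `1 × p` matrix. -/
def outMat {L p : ℕ} (w : Params L p) : Matrix (Fin 1) (Fin p) ℝ :=
  Matrix.of fun _ j => w (Sum.inr j)

/-- Pre-activation features `u_{ℓ+1,s}^V` of the hidden layer with 0-based index `ℓ`. -/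
def uFeat {L p : ℕ} (φ : ℝ → ℝ) (w : Params L p) (x : Fin p → ℝ) (ℓ : Fin L) : Fin p → ℝ :=
  (layerMat w ℓ).mulVec (feat φ w x ℓ)

/-- The diagonal matrix `Σ_{ℓ+1,s}^V = diag(φ'(u_{ℓ+1,s}^V))`. -/
def sigmaMat {L p : ℕ} (φ : ℝ → ℝ) (w : Params L p) (x : Fin p → ℝ) (ℓ : Fin L) :
    Matrix (Fin p) (Fin p) ℝ :=
  Matrix.diagonal fun i => deriv φ (uFeat φ w x ℓ i)

/-- `g_s(V) = 1 / (1 + exp(y_s f_V(x_s)))`. -/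
def gS {L p : ℕ} (φ : ℝ → ℝ) (x : Fin p → ℝ) (y : ℝ) (w : Params L p) : ℝ :=
  1 / (1 + Real.exp (y * netOut φ w x))

/-- `V` and `W` agree on every layer except possibly the one with paper index `ℓ + 1`
(`ℓ : Fin (L+1)`; the value `ℓ = L` designates the outer layer `V_{L+1}`). -/
def eqExcept {L p : ℕ} (V W : Params L p) (ℓ : Fin (L + 1)) : Prop :=
  (∀ j : Fin L, (j : ℕ) ≠ (ℓ : ℕ) → layerMat V j = layerMat W j) ∧
    ((ℓ : ℕ) < L → outMat V = outMat W)

/-- Operator norm `‖V_ℓ - W_ℓ‖_op` of the difference at the (single) layer with paper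
index `ℓ + 1`. -/
def layerOpDiff {L p : ℕ} (V W : Params L p) (ℓ : Fin (L + 1)) : ℝ :=
  if h : (ℓ : ℕ) < L then opNorm (layerMat V ⟨ℓ, h⟩ - layerMat W ⟨ℓ, h⟩)
  else opNorm (outMat V - outMat W)

namespace S15aux

lemma enorm_nonneg {p : ℕ} (v : Fin p → ℝ) : 0 ≤ _root_.enorm v := Real.sqrt_nonneg _

lemma enorm_eq_norm {p : ℕ} (v : Fin p → ℝ) :
    _root_.enorm v = ‖(WithLp.equiv 2 (Fin p → ℝ)).symm v‖ := by
  rw [EuclideanSpace.norm_eq, _root_.enorm]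
  congr 1
  refine Finset.sum_congr rfl fun i _ => ?_
  rw [Real.norm_eq_abs, sq_abs]
  rfl

lemma opNorm_nonneg' {m k : ℕ} (A : Matrix (Fin m) (Fin k) ℝ) : 0 ≤ opNorm A :=
  norm_nonneg _

lemma mulVec_enorm_le {p : ℕ} (A : Matrix (Fin p) (Fin p) ℝ) (v : Fin p → ℝ) :
    _root_.enorm (A.mulVec v) ≤ opNorm A * _root_.enorm v := by
  rw [enorm_eq_norm, enorm_eq_norm]
  have h1 := (LinearMap.toContinuousLinearMap (Matrix.toEuclideanLin A)).le_opNorm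
      ((WithLp.equiv 2 (Fin p → ℝ)).symm v)
  have h2 : LinearMap.toContinuousLinearMap (Matrix.toEuclideanLin A)
      ((WithLp.equiv 2 (Fin p → ℝ)).symm v) = (WithLp.equiv 2 (Fin p → ℝ)).symm (A.mulVec v) :=
    Matrix.toEuclideanLin_apply_piLp_toLp A v
  rw [h2] at h1
  exact h1

set_option synthInstance.maxHeartbeats 1000000 in
lemma opNorm_le_bound' {p : ℕ} (A : Matrix (Fin p) (Fin p) ℝ) (c : ℝ) (hc : 0 ≤ c)
    (hb : ∀ v : Fin p → ℝ, _root_.enorm (A.mulVec v) ≤ c * _root_.enorm v) : opNorm A ≤ c := by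
  refine ContinuousLinearMap.opNorm_le_bound _ hc fun w => ?_
  have h1 := hb ((WithLp.equiv 2 (Fin p → ℝ)) w)
  rw [enorm_eq_norm, enorm_eq_norm] at h1
  have h2 : LinearMap.toContinuousLinearMap (Matrix.toEuclideanLin A) w =
      (WithLp.equiv 2 (Fin p → ℝ)).symm (A.mulVec ((WithLp.equiv 2 (Fin p → ℝ)) w)) :=
    Matrix.toEuclideanLin_apply_piLp_toLp A _
  rw [h2]
  simpa using h1

end S15aux

namespace S15aux

lemma enorm_mono {p : ℕ} {a b : Fin p → ℝ} (h : ∀ i, |a i| ≤ |b i|) : _root_.enorm a ≤ _root_.enorm b := by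
  refine Real.sqrt_le_sqrt (Finset.sum_le_sum fun i _ => ?_)
  have := h i
  nlinarith [abs_nonneg (a i), abs_nonneg (b i), sq_abs (a i), sq_abs (b i)]

lemma abs_le_enorm {p : ℕ} (v : Fin p → ℝ) (i : Fin p) : |v i| ≤ _root_.enorm v := by
  rw [← Real.sqrt_sq_eq_abs]
  exact Real.sqrt_le_sqrt (Finset.single_le_sum (fun j _ => sq_nonneg (v j)) (Finset.mem_univ i))

lemma opNorm_le_frobenius {p : ℕ} (A : Matrix (Fin p) (Fin p) ℝ) :
    opNorm A ≤ Real.sqrt (∑ i, ∑ j, A i j ^ 2) := by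
  refine opNorm_le_bound' A _ (Real.sqrt_nonneg _) fun v => ?_
  rw [_root_.enorm, _root_.enorm, ← Real.sqrt_mul (by positivity)]
  refine Real.sqrt_le_sqrt ?_
  have key : ∀ i, (A.mulVec v i) ^ 2 ≤ (∑ j, A i j ^ 2) * (∑ j, v j ^ 2) := fun i =>
    Finset.sum_mul_sq_le_sq_mul_sq Finset.univ (fun j => A i j) v
  calc ∑ i, (A.mulVec v i) ^ 2 ≤ ∑ i, (∑ j, A i j ^ 2) * (∑ j, v j ^ 2) :=
        Finset.sum_le_sum fun i _ => key i
    _ = (∑ i, ∑ j, A i j ^ 2) * (∑ j, v j ^ 2) := by rw [Finset.sum_mul]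

lemma opNorm_diagonal_le {p : ℕ} (d : Fin p → ℝ) (c : ℝ) (hc : 0 ≤ c)
    (hd : ∀ i, |d i| ≤ c) : opNorm (Matrix.diagonal d) ≤ c := by
  refine opNorm_le_bound' _ _ hc fun v => ?_
  rw [_root_.enorm, _root_.enorm, ← Real.sqrt_sq hc, ← Real.sqrt_mul (by positivity)]
  refine Real.sqrt_le_sqrt ?_
  rw [Finset.mul_sum]
  refine Finset.sum_le_sum fun i _ => ?_
  rw [Matrix.mulVec_diagonal]
  have h1 : (d i) ^ 2 ≤ c ^ 2 := by nlinarith [hd i, abs_nonneg (d i), sq_abs (d i)]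
  nlinarith [sq_nonneg (v i)]

lemma layerMat_opNorm_le {L p : ℕ} (w : Params L p) (ℓ : Fin L) : opNorm (layerMat w ℓ) ≤ ‖w‖ := by
  refine (opNorm_le_frobenius _).trans ?_
  rw [EuclideanSpace.norm_eq]
  refine Real.sqrt_le_sqrt ?_
  have h1 : ∑ i, ∑ j, (layerMat w ℓ i j) ^ 2
      = ∑ q : Fin p × Fin p, ‖w (Sum.inl (ℓ, q.1, q.2))‖ ^ 2 := by
    rw [← Finset.sum_product']
    refine Finset.sum_congr rfl fun q _ => ?_
    rw [Real.norm_eq_abs, sq_abs]; rfl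
  rw [h1]
  have h2 : ∑ k : (Fin L × Fin p × Fin p) ⊕ Fin p, ‖w k‖ ^ 2
      = (∑ t : Fin L × Fin p × Fin p, ‖w (Sum.inl t)‖ ^ 2) + ∑ j : Fin p, ‖w (Sum.inr j)‖ ^ 2 :=
    Fintype.sum_sum_type _
  rw [h2]
  have h3 : ∑ t : Fin L × Fin p × Fin p, ‖w (Sum.inl t)‖ ^ 2
      = ∑ m : Fin L, ∑ q : Fin p × Fin p, ‖w (Sum.inl (m, q.1, q.2))‖ ^ 2 := by
    rw [Fintype.sum_prod_type]
  have h4 : ∑ q : Fin p × Fin p, ‖w (Sum.inl (ℓ, q.1, q.2))‖ ^ 2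
      ≤ ∑ m : Fin L, ∑ q : Fin p × Fin p, ‖w (Sum.inl (m, q.1, q.2))‖ ^ 2 :=
    Finset.single_le_sum (f := fun m => ∑ q : Fin p × Fin p, ‖w (Sum.inl (m, q.1, q.2))‖ ^ 2)
      (fun m _ => Finset.sum_nonneg fun q _ => sq_nonneg _) (Finset.mem_univ ℓ)
  have h5 : (0:ℝ) ≤ ∑ j : Fin p, ‖w (Sum.inr j)‖ ^ 2 :=
    Finset.sum_nonneg fun j _ => sq_nonneg _
  linarith [h3 ▸ h4]

end S15aux


namespace S15aux

section Feat

variable {L p : ℕ} (φ : ℝ → ℝ) (h : ℝ)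

lemma phi_lip (hφ : SmoothApproxReLU φ h) (a b : ℝ) : |φ a - φ b| ≤ |a - b| := by
  have hlip : LipschitzWith 1 φ := by
    refine lipschitzWith_of_nnnorm_deriv_le hφ.1 fun z => ?_
    have h1 := hφ.2.2.2.1 z
    rw [← NNReal.coe_le_coe, coe_nnnorm, Real.norm_eq_abs, NNReal.coe_one]
    exact h1
  have := hlip.dist_le_mul a b
  simpa [Real.dist_eq] using this

lemma phi_abs_le (hφ : SmoothApproxReLU φ h) (a : ℝ) : |φ a| ≤ |a| := by
  have := phi_lip φ h hφ a 0
  simpa [hφ.2.1] using this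

lemma feat_enorm_le (hφ : SmoothApproxReLU φ h) (w : Params L p) (x : Fin p → ℝ) (hw : 1 ≤ ‖w‖) (hx : _root_.enorm x = 1) :
    ∀ j : ℕ, _root_.enorm (feat φ w x j) ≤ ‖w‖ ^ j := by
  intro j
  induction j with
  | zero => simp [feat, hx]
  | succ j ih =>
    by_cases hl : j < L
    · have hunf : feat φ w x (j + 1)
          = fun i => φ ((layerMat w ⟨j, hl⟩).mulVec (feat φ w x j) i) := by
        simp [feat, dif_pos hl]
      rw [hunf]
      have h1 : _root_.enorm (fun i => φ ((layerMat w ⟨j, hl⟩).mulVec (feat φ w x j) i))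
          ≤ _root_.enorm ((layerMat w ⟨j, hl⟩).mulVec (feat φ w x j)) :=
        enorm_mono fun i => phi_abs_le φ h hφ _
      refine h1.trans ((mulVec_enorm_le _ _).trans ?_)
      rw [pow_succ, mul_comm (‖w‖ ^ j) ‖w‖]
      exact mul_le_mul (layerMat_opNorm_le w _) ih (enorm_nonneg _) (norm_nonneg w)
    · have hunf : feat φ w x (j + 1) = feat φ w x j := by simp [feat, dif_neg hl]
      rw [hunf]
      exact ih.trans (pow_le_pow_right₀ hw (Nat.le_succ j))

variable {V W : Params L p} {ℓ : Fin L} (x : Fin p → ℝ)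

lemma feat_eq_below (hdiff : eqExcept V W ℓ.castSucc) :
    ∀ j : ℕ, j ≤ ℓ.val → feat φ V x j = feat φ W x j := by
  intro j
  induction j with
  | zero => intro _; rfl
  | succ j ih =>
    intro hj
    have hj' : j ≤ ℓ.val := Nat.le_of_succ_le hj
    by_cases hl : j < L
    · have hne : ((⟨j, hl⟩ : Fin L) : ℕ) ≠ (ℓ.castSucc : ℕ) := by
        simp only [Fin.coe_castSucc]
        omega
      have heq := hdiff.1 ⟨j, hl⟩ hne
      simp [feat, dif_pos hl, ih hj', heq]
    · simp [feat, dif_neg hl, ih hj']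

lemma feat_diff_bound (hφ : SmoothApproxReLU φ h) (hdiff : eqExcept V W ℓ.castSucc) (hM : 1 ≤ ‖V‖)
    (hx : _root_.enorm x = 1) :
    ∀ k : ℕ, _root_.enorm (feat φ V x (ℓ.val + 1 + k) - feat φ W x (ℓ.val + 1 + k))
      ≤ opNorm (layerMat V ℓ - layerMat W ℓ) * ‖V‖ ^ (ℓ.val + k) := by
  set Δ := opNorm (layerMat V ℓ - layerMat W ℓ) with hΔ
  have hΔ0 : 0 ≤ Δ := opNorm_nonneg' _
  intro k
  induction k with
  | zero =>
    have hl : ℓ.val < L := ℓ.isLt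
    have ha : feat φ V x ℓ.val = feat φ W x ℓ.val := feat_eq_below φ x hdiff ℓ.val le_rfl
    have hunfV : feat φ V x (ℓ.val + 1)
        = fun i => φ ((layerMat V ℓ).mulVec (feat φ V x ℓ.val) i) := by
      simp [feat, dif_pos hl, Fin.eta]
    have hunfW : feat φ W x (ℓ.val + 1)
        = fun i => φ ((layerMat W ℓ).mulVec (feat φ V x ℓ.val) i) := by
      rw [ha]
      simp [feat, dif_pos hl, Fin.eta]
    have h1 : _root_.enorm (feat φ V x (ℓ.val + 1) - feat φ W x (ℓ.val + 1))
        ≤ _root_.enorm ((layerMat V ℓ - layerMat W ℓ).mulVec (feat φ V x ℓ.val)) := by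
      refine enorm_mono fun i => ?_
      rw [hunfV, hunfW, Matrix.sub_mulVec]
      simp only [Pi.sub_apply]
      exact phi_lip φ h hφ _ _
    refine h1.trans ((mulVec_enorm_le _ _).trans ?_)
    simp only [Nat.add_zero]
    exact mul_le_mul_of_nonneg_left (feat_enorm_le φ h hφ V x hM hx ℓ.val) hΔ0
  | succ k ih =>
    set j := ℓ.val + 1 + k with hjdef
    have hstep : ℓ.val + 1 + (k + 1) = j + 1 := by omega
    rw [hstep]
    by_cases hl : j < L
    · have hne : ((⟨j, hl⟩ : Fin L) : ℕ) ≠ (ℓ.castSucc : ℕ) := by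
        simp only [Fin.coe_castSucc]
        omega
      have heq := hdiff.1 ⟨j, hl⟩ hne
      have hunfV : feat φ V x (j + 1)
          = fun i => φ ((layerMat V ⟨j, hl⟩).mulVec (feat φ V x j) i) := by
        simp [feat, dif_pos hl]
      have hunfW : feat φ W x (j + 1)
          = fun i => φ ((layerMat V ⟨j, hl⟩).mulVec (feat φ W x j) i) := by
        simp [feat, dif_pos hl, heq]
      have h1 : _root_.enorm (feat φ V x (j + 1) - feat φ W x (j + 1))
          ≤ _root_.enorm ((layerMat V ⟨j, hl⟩).mulVec (feat φ V x j - feat φ W x j)) := by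
        refine enorm_mono fun i => ?_
        rw [hunfV, hunfW, Matrix.mulVec_sub]
        simp only [Pi.sub_apply]
        exact phi_lip φ h hφ _ _
      refine h1.trans ((mulVec_enorm_le _ _).trans ?_)
      calc opNorm (layerMat V ⟨j, hl⟩) * _root_.enorm (feat φ V x j - feat φ W x j)
          ≤ ‖V‖ * (Δ * ‖V‖ ^ (ℓ.val + k)) := by
            exact mul_le_mul (layerMat_opNorm_le V _) ih (enorm_nonneg _) (norm_nonneg V)
        _ = Δ * ‖V‖ ^ (ℓ.val + (k + 1)) := by ring
    · have hunfV : feat φ V x (j + 1) = feat φ V x j := by simp [feat, dif_neg hl]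
      have hunfW : feat φ W x (j + 1) = feat φ W x j := by simp [feat, dif_neg hl]
      rw [hunfV, hunfW]
      refine ih.trans ?_
      exact mul_le_mul_of_nonneg_left
        (pow_le_pow_right₀ hM (by omega)) hΔ0

lemma uFeat_diff_bound (hφ : SmoothApproxReLU φ h) (hdiff : eqExcept V W ℓ.castSucc) (hM : 1 ≤ ‖V‖)
    (hx : _root_.enorm x = 1) (j : Fin L) :
    _root_.enorm (uFeat φ V x j - uFeat φ W x j)
      ≤ opNorm (layerMat V ℓ - layerMat W ℓ) * ‖V‖ ^ (L + 1) := by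
  set Δ := opNorm (layerMat V ℓ - layerMat W ℓ) with hΔ
  have hΔ0 : 0 ≤ Δ := opNorm_nonneg' _
  have hM0 : (0:ℝ) ≤ ‖V‖ := norm_nonneg V
  rcases lt_trichotomy j.val ℓ.val with hlt | heq | hgt
  · have ha : feat φ V x j.val = feat φ W x j.val :=
      feat_eq_below φ x hdiff j.val (Nat.le_of_lt hlt)
    have hne : (j : ℕ) ≠ (ℓ.castSucc : ℕ) := by
      simp only [Fin.coe_castSucc]; omega
    have heqm := hdiff.1 j hne
    have : uFeat φ V x j = uFeat φ W x j := by
      rw [uFeat, uFeat, ha, heqm]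
    rw [this, sub_self]
    have h0 : _root_.enorm (0 : Fin p → ℝ) = 0 := by simp [_root_.enorm]
    rw [h0]
    positivity
  · have hj : j = ℓ := Fin.ext heq
    subst hj
    have ha : feat φ V x j.val = feat φ W x j.val := feat_eq_below φ x hdiff j.val le_rfl
    have h1 : uFeat φ V x j - uFeat φ W x j
        = (layerMat V j - layerMat W j).mulVec (feat φ V x j.val) := by
      rw [uFeat, uFeat, ← ha, Matrix.sub_mulVec]
    rw [h1]
    refine (mulVec_enorm_le _ _).trans ?_
    refine mul_le_mul_of_nonneg_left ?_ hΔ0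
    refine (feat_enorm_le φ h hφ V x hM hx j.val).trans ?_
    exact pow_le_pow_right₀ hM (by omega)
  · obtain ⟨k, hk⟩ : ∃ k, ℓ.val + 1 + k = j.val := ⟨j.val - ℓ.val - 1, by omega⟩
    have hne : (j : ℕ) ≠ (ℓ.castSucc : ℕ) := by
      simp only [Fin.coe_castSucc]; omega
    have heqm := hdiff.1 j hne
    have h1 : uFeat φ V x j - uFeat φ W x j
        = (layerMat V j).mulVec (feat φ V x j.val - feat φ W x j.val) := by
      rw [uFeat, uFeat, ← heqm, Matrix.mulVec_sub]
    rw [h1]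
    refine (mulVec_enorm_le _ _).trans ?_
    have h2 := feat_diff_bound φ h x hφ hdiff hM hx k
    rw [hk] at h2
    calc opNorm (layerMat V j) * _root_.enorm (feat φ V x j.val - feat φ W x j.val)
        ≤ ‖V‖ * (Δ * ‖V‖ ^ (ℓ.val + k)) :=
          mul_le_mul (layerMat_opNorm_le V _) h2 (enorm_nonneg _) hM0
      _ = Δ * ‖V‖ ^ (ℓ.val + k + 1) := by ring
      _ ≤ Δ * ‖V‖ ^ (L + 1) := by
          refine mul_le_mul_of_nonneg_left (pow_le_pow_right₀ hM ?_) hΔ0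
          omega

end Feat

end S15aux

/-- Lemma `l:phi.prime.close`: if `V` and `W` differ only in the hidden
layer with paper index `ℓ + 1` (`ℓ : Fin L`), then all the diagonal matrices
`Σ_{j,s}` move by at most `‖V_ℓ - W_ℓ‖_op ‖V‖^{L+1} / h` in operator norm. -/
theorem statement15
    (L p : ℕ) (hL : 1 ≤ L) (hp : 1 ≤ p)
    (φ : ℝ → ℝ) (h : ℝ) (hh0 : 0 < h) (hφ : SmoothApproxReLU φ h)
    (x : Fin p → ℝ) (hx : _root_.enorm x = 1)
    (V W : Params L p) (ℓ : Fin L) (hdiff : eqExcept V W ℓ.castSucc)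
    (hV : Real.sqrt ((L : ℝ) + 1 / 2) < ‖V‖) (hW : Real.sqrt ((L : ℝ) + 1 / 2) < ‖W‖) :
    ∀ j : Fin L, opNorm (sigmaMat φ V x j - sigmaMat φ W x j) ≤
      opNorm (layerMat V ℓ - layerMat W ℓ) * ‖V‖ ^ (L + 1) / h := by
  intro j
  classical
  have hM : 1 ≤ ‖V‖ := by
    have h1 : (1:ℝ) ≤ Real.sqrt ((L : ℝ) + 1 / 2) := by
      rw [Real.one_le_sqrt]
      have : (1:ℝ) ≤ (L:ℝ) := by exact_mod_cast hL
      linarith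
    linarith
  set Δ := opNorm (layerMat V ℓ - layerMat W ℓ) with hΔ
  have hΔ0 : 0 ≤ Δ := S15aux.opNorm_nonneg' _
  have hMpow : (0:ℝ) ≤ ‖V‖ ^ (L + 1) := pow_nonneg (norm_nonneg V) _
  have hc : (0:ℝ) ≤ Δ * ‖V‖ ^ (L + 1) / h := by positivity
  have hu := S15aux.uFeat_diff_bound φ h x hφ hdiff hM hx j
  have hdiag : sigmaMat φ V x j - sigmaMat φ W x j
      = Matrix.diagonal ((fun i => deriv φ (uFeat φ V x j i))
          - fun i => deriv φ (uFeat φ W x j i)) := by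
    rw [sigmaMat, sigmaMat, Matrix.diagonal_sub]
    rfl
  rw [hdiag]
  refine S15aux.opNorm_diagonal_le _ _ hc fun i => ?_
  simp only [Pi.sub_apply]
  have h1 := hφ.2.2.1 (uFeat φ V x j i) (uFeat φ W x j i)
  have h2 : |uFeat φ V x j i - uFeat φ W x j i|
      ≤ Δ * ‖V‖ ^ (L + 1) := by
    have h3 := S15aux.abs_le_enorm (uFeat φ V x j - uFeat φ W x j) i
    simp only [Pi.sub_apply] at h3
    exact h3.trans hu
  have hh' : (0:ℝ) ≤ 1 / h := by positivity
  calc |deriv φ (uFeat φ V x j i) - deriv φ (uFeat φ W x j i)|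
      ≤ (1 / h) * |uFeat φ V x j i - uFeat φ W x j i| := h1
    _ ≤ (1 / h) * (Δ * ‖V‖ ^ (L + 1)) := mul_le_mul_of_nonneg_left h2 hh'
    _ = Δ * ‖V‖ ^ (L + 1) / h := by ring
end
end

section
/- Let the activation be h-smoothly approximately ReLU (for some h > 0). Let V = (V_1,…,V_{L+1}) and W = (W_1,…,W_{L+1}) be weight tuples and ℓ ∈ {1,…,L+1} such that V_j = W_j for all j ≠ ℓ, with ‖V_ℓ − W_ℓ‖_op·‖V‖^{L+1} ≤ 1 and ‖V‖, ‖W‖ > √(L + 1/2). Fix an example s and suppose that for every convex combination W̃ of V and W one has J_s(W̃) ≤ 2·J_s(V). Then |g_s(V) − g_s(W)| ≤ 2·J_s(V)·‖V_ℓ − W_ℓ‖_op·‖V‖^{L+1}. -/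
open scoped BigOperators
noncomputable section

section Statement16Aux

lemma s16_enorm_nonneg {p : ℕ} (v : Fin p → ℝ) : 0 ≤ _root_.enorm v := Real.sqrt_nonneg _

lemma s16_enorm_mono {p : ℕ} {v w : Fin p → ℝ} (h : ∀ i, |v i| ≤ |w i|) :
    _root_.enorm v ≤ _root_.enorm w := by
  apply Real.sqrt_le_sqrt
  apply Finset.sum_le_sum
  intro i _
  calc v i ^ 2 = |v i| ^ 2 := (sq_abs _).symm
    _ ≤ |w i| ^ 2 := pow_le_pow_left₀ (abs_nonneg _) (h i) 2
    _ = w i ^ 2 := sq_abs _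

lemma s16_abs_le_enorm {p : ℕ} (v : Fin p → ℝ) (i : Fin p) : |v i| ≤ _root_.enorm v := by
  rw [← Real.sqrt_sq_eq_abs]
  exact Real.sqrt_le_sqrt (Finset.single_le_sum (f := fun j => v j ^ 2)
    (fun j _ => sq_nonneg _) (Finset.mem_univ i))

lemma s16_abs_sum_mul_le {p : ℕ} (v w : Fin p → ℝ) :
    |∑ j, v j * w j| ≤ _root_.enorm v * _root_.enorm w := by
  rw [← Real.sqrt_sq_eq_abs]
  unfold _root_.enorm
  rw [← Real.sqrt_mul (by positivity)]
  exact Real.sqrt_le_sqrt (Finset.sum_mul_sq_le_sq_mul_sq _ _ _)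

lemma s16_enorm_eq_norm {p : ℕ} (v : Fin p → ℝ) :
    _root_.enorm v = ‖(WithLp.equiv 2 (Fin p → ℝ)).symm v‖ := by
  rw [EuclideanSpace.norm_eq]
  unfold _root_.enorm
  congr 1
  refine Finset.sum_congr rfl fun i _ => ?_
  rw [Real.norm_eq_abs, sq_abs]; rfl

lemma s16_enorm_mulVec_le {m k : ℕ} (A : Matrix (Fin m) (Fin k) ℝ) (v : Fin k → ℝ) :
    _root_.enorm (A.mulVec v) ≤ opNorm A * _root_.enorm v := by
  rw [s16_enorm_eq_norm, s16_enorm_eq_norm]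
  have h1 : (WithLp.equiv 2 (Fin m → ℝ)).symm (A.mulVec v)
      = LinearMap.toContinuousLinearMap (Matrix.toEuclideanLin A)
          ((WithLp.equiv 2 (Fin k → ℝ)).symm v) := rfl
  rw [h1]
  exact ContinuousLinearMap.le_opNorm _ _

lemma s16_enorm_mulVec_le_sqrt {m k : ℕ} (A : Matrix (Fin m) (Fin k) ℝ) (w : Fin k → ℝ) :
    _root_.enorm (A.mulVec w) ≤ Real.sqrt (∑ i, ∑ j, A i j ^ 2) * _root_.enorm w := by
  unfold _root_.enorm
  rw [← Real.sqrt_mul (by positivity)]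
  apply Real.sqrt_le_sqrt
  calc ∑ i, (A.mulVec w) i ^ 2 ≤ ∑ i, ((∑ j, A i j ^ 2) * ∑ j, w j ^ 2) := by
        apply Finset.sum_le_sum; intro i _
        have hme : A.mulVec w i = ∑ j, A i j * w j := rfl
        rw [hme]
        exact Finset.sum_mul_sq_le_sq_mul_sq _ _ _
    _ = (∑ i, ∑ j, A i j ^ 2) * ∑ j, w j ^ 2 := by rw [← Finset.sum_mul]

lemma s16_opNorm_le_sqrt {m k : ℕ} (A : Matrix (Fin m) (Fin k) ℝ) :
    opNorm A ≤ Real.sqrt (∑ i, ∑ j, A i j ^ 2) := by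
  apply ContinuousLinearMap.opNorm_le_bound _ (Real.sqrt_nonneg _)
  intro v
  have h1 : ‖(LinearMap.toContinuousLinearMap (Matrix.toEuclideanLin A)) v‖
      = _root_.enorm (A.mulVec ((WithLp.equiv 2 (Fin k → ℝ)) v)) := by
    rw [s16_enorm_eq_norm]; rfl
  have h2 : ‖v‖ = _root_.enorm ((WithLp.equiv 2 (Fin k → ℝ)) v) := by
    rw [s16_enorm_eq_norm]; rfl
  rw [h1, h2]
  exact s16_enorm_mulVec_le_sqrt _ _

lemma s16_sq_norm_params {L p : ℕ} (V : Params L p) :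
    ‖V‖ ^ 2 = (∑ k : Fin L, ∑ i, ∑ j, (layerMat V k i j) ^ 2) + ∑ j, (outVec V j) ^ 2 := by
  rw [EuclideanSpace.norm_eq, Real.sq_sqrt (by positivity)]
  rw [Fintype.sum_sum_type]
  congr 1
  · rw [Fintype.sum_prod_type]
    refine Finset.sum_congr rfl fun k _ => ?_
    rw [Fintype.sum_prod_type]
    refine Finset.sum_congr rfl fun i _ => Finset.sum_congr rfl fun j _ => ?_
    rw [Real.norm_eq_abs, sq_abs]; rfl
  · refine Finset.sum_congr rfl fun j _ => ?_
    rw [Real.norm_eq_abs, sq_abs]; rfl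

lemma s16_layer_sq_le {L p : ℕ} (V : Params L p) (k : Fin L) :
    Real.sqrt (∑ i, ∑ j, (layerMat V k i j) ^ 2) ≤ ‖V‖ := by
  rw [← Real.sqrt_sq (norm_nonneg V)]
  apply Real.sqrt_le_sqrt
  rw [s16_sq_norm_params]
  have h1 : (∑ i, ∑ j, (layerMat V k i j) ^ 2)
      ≤ ∑ k' : Fin L, ∑ i, ∑ j, (layerMat V k' i j) ^ 2 :=
    Finset.single_le_sum (f := fun k' : Fin L => ∑ i, ∑ j, (layerMat V k' i j) ^ 2)
      (fun k' _ => by positivity) (Finset.mem_univ k)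
  have h2 : (0:ℝ) ≤ ∑ j, (outVec V j) ^ 2 := by positivity
  linarith

lemma s16_outVec_le {L p : ℕ} (V : Params L p) : _root_.enorm (outVec V) ≤ ‖V‖ := by
  rw [← Real.sqrt_sq (norm_nonneg V)]
  apply Real.sqrt_le_sqrt
  rw [s16_sq_norm_params]
  have h1 : (0:ℝ) ≤ ∑ k : Fin L, ∑ i, ∑ j, (layerMat V k i j) ^ 2 := by positivity
  linarith

lemma s16_phi_lip {φ : ℝ → ℝ} {h : ℝ} (hφ : SmoothApproxReLU φ h) (a b : ℝ) :
    |φ a - φ b| ≤ |a - b| := by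
  have hl : LipschitzWith 1 φ := by
    apply lipschitzWith_of_nnnorm_deriv_le hφ.1
    intro z
    rw [← NNReal.coe_le_coe]
    simpa [Real.norm_eq_abs] using hφ.2.2.2.1 z
  have := hl.dist_le_mul a b
  simpa [Real.dist_eq] using this

lemma s16_phi_abs_le {φ : ℝ → ℝ} {h : ℝ} (hφ : SmoothApproxReLU φ h) (z : ℝ) :
    |φ z| ≤ |z| := by
  have := s16_phi_lip hφ z 0
  simpa [hφ.2.1] using this

lemma s16_opNorm_layer_le {L p : ℕ} (V : Params L p) (k : Fin L) :
    opNorm (layerMat V k) ≤ ‖V‖ :=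
  (s16_opNorm_le_sqrt _).trans (s16_layer_sq_le V k)

lemma s16_feat_le {L p : ℕ} {φ : ℝ → ℝ} {h : ℝ} (hφ : SmoothApproxReLU φ h)
    (V : Params L p) (x : Fin p → ℝ) (hx : _root_.enorm x = 1) (hV1 : 1 ≤ ‖V‖) :
    ∀ k, _root_.enorm (feat φ V x k) ≤ ‖V‖ ^ k := by
  intro k
  induction k with
  | zero => simp [feat, hx]
  | succ k ih =>
    by_cases hl : k < L
    · have hfe : feat φ V x (k+1)
          = fun i => φ ((layerMat V ⟨k, hl⟩).mulVec (feat φ V x k) i) := by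
        simp [feat, hl]
      rw [hfe, pow_succ]
      calc _root_.enorm (fun i => φ ((layerMat V ⟨k, hl⟩).mulVec (feat φ V x k) i))
          ≤ _root_.enorm ((layerMat V ⟨k, hl⟩).mulVec (feat φ V x k)) :=
            s16_enorm_mono fun i => s16_phi_abs_le hφ _
        _ ≤ opNorm (layerMat V ⟨k, hl⟩) * _root_.enorm (feat φ V x k) := s16_enorm_mulVec_le _ _
        _ ≤ ‖V‖ * ‖V‖ ^ k :=
            mul_le_mul (s16_opNorm_layer_le V _) ih (s16_enorm_nonneg _) (norm_nonneg V)
        _ = ‖V‖ ^ k * ‖V‖ := mul_comm _ _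
    · have hfe : feat φ V x (k+1) = feat φ V x k := by simp [feat, hl]
      rw [hfe]
      calc _root_.enorm (feat φ V x k) ≤ ‖V‖ ^ k := ih
        _ ≤ ‖V‖ ^ (k+1) := pow_le_pow_right₀ hV1 (Nat.le_succ k)

lemma s16_feat_eq {L p : ℕ} (φ : ℝ → ℝ) (V W : Params L p) (x : Fin p → ℝ) (m : ℕ)
    (hlayers : ∀ j : Fin L, (j : ℕ) < m → layerMat V j = layerMat W j) :
    ∀ k, k ≤ m → feat φ V x k = feat φ W x k := by
  intro k
  induction k with
  | zero => intro _; rfl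
  | succ k ih =>
    intro hk
    have hk' : k ≤ m := Nat.le_of_succ_le hk
    by_cases hl : k < L
    · have h1 : layerMat V ⟨k, hl⟩ = layerMat W ⟨k, hl⟩ :=
        hlayers ⟨k, hl⟩ (by simpa using lt_of_lt_of_le (Nat.lt_succ_self k) hk)
      simp [feat, hl, h1, ih hk']
    · simp [feat, hl, ih hk']

lemma s16_netOut_diff {L p : ℕ} {φ : ℝ → ℝ} {h : ℝ} (hφ : SmoothApproxReLU φ h)
    (x : Fin p → ℝ) (hx : _root_.enorm x = 1)
    (V W : Params L p) (ℓ : Fin (L + 1)) (hdiff : eqExcept V W ℓ) (hV1 : 1 ≤ ‖V‖) :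
    |netOut φ V x - netOut φ W x| ≤ layerOpDiff V W ℓ * ‖V‖ ^ L := by
  have hfeatV := s16_feat_le hφ V x hx hV1
  by_cases hcase : (ℓ : ℕ) < L
  · set A := layerMat V ⟨(ℓ : ℕ), hcase⟩ with hA
    set B := layerMat W ⟨(ℓ : ℕ), hcase⟩ with hB
    have hop : layerOpDiff V W ℓ = opNorm (A - B) := by rw [layerOpDiff, dif_pos hcase]
    have hopnn : 0 ≤ opNorm (A - B) := norm_nonneg _
    have hfeq : ∀ k, k ≤ (ℓ : ℕ) → feat φ V x k = feat φ W x k :=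
      s16_feat_eq φ V W x (ℓ : ℕ) (fun j hj => hdiff.1 j (Nat.ne_of_lt hj))
    have hd : ∀ m, (ℓ : ℕ) + 1 + m ≤ L →
        _root_.enorm (fun i => feat φ V x ((ℓ : ℕ) + 1 + m) i - feat φ W x ((ℓ : ℕ) + 1 + m) i)
          ≤ opNorm (A - B) * ‖V‖ ^ ((ℓ : ℕ) + m) := by
      intro m
      induction m with
      | zero =>
        intro _
        simp only [Nat.add_zero]
        have hu : feat φ W x (ℓ : ℕ) = feat φ V x (ℓ : ℕ) := (hfeq _ le_rfl).symm
        have heV : feat φ V x ((ℓ : ℕ) + 1)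
            = fun i => φ (A.mulVec (feat φ V x (ℓ : ℕ)) i) := by
          simp [feat, hcase, hA]
        have heW : feat φ W x ((ℓ : ℕ) + 1)
            = fun i => φ (B.mulVec (feat φ V x (ℓ : ℕ)) i) := by
          simp [feat, hcase, hB, hu]
        rw [heV, heW]
        calc _root_.enorm (fun i => φ (A.mulVec (feat φ V x (ℓ : ℕ)) i)
                - φ (B.mulVec (feat φ V x (ℓ : ℕ)) i))
            ≤ _root_.enorm ((A - B).mulVec (feat φ V x (ℓ : ℕ))) := by
              apply s16_enorm_mono
              intro i
              have h1 : ((A - B).mulVec (feat φ V x (ℓ : ℕ))) i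
                  = A.mulVec (feat φ V x (ℓ : ℕ)) i - B.mulVec (feat φ V x (ℓ : ℕ)) i := by
                rw [Matrix.sub_mulVec]; rfl
              rw [h1]
              exact s16_phi_lip hφ _ _
          _ ≤ opNorm (A - B) * _root_.enorm (feat φ V x (ℓ : ℕ)) := s16_enorm_mulVec_le _ _
          _ ≤ opNorm (A - B) * ‖V‖ ^ (ℓ : ℕ) :=
              mul_le_mul_of_nonneg_left (hfeatV _) hopnn
      | succ m ih =>
        intro hs
        have hk0 : (ℓ : ℕ) + 1 + m < L := by omega
        have ihb := ih (by omega)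
        have hkey : ((ℓ : ℕ) + 1 + (m + 1)) = ((ℓ : ℕ) + 1 + m) + 1 := by omega
        rw [hkey]
        set k0 := (ℓ : ℕ) + 1 + m with hk0def
        have hlay : layerMat V ⟨k0, hk0⟩ = layerMat W ⟨k0, hk0⟩ :=
          hdiff.1 ⟨k0, hk0⟩ (by simp [hk0def]; omega)
        have heV : feat φ V x (k0 + 1)
            = fun i => φ ((layerMat V ⟨k0, hk0⟩).mulVec (feat φ V x k0) i) := by
          simp [feat, hk0]
        have heW : feat φ W x (k0 + 1)
            = fun i => φ ((layerMat V ⟨k0, hk0⟩).mulVec (feat φ W x k0) i) := by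
          simp [feat, hk0, ← hlay]
        rw [heV, heW]
        calc _root_.enorm (fun i => φ ((layerMat V ⟨k0, hk0⟩).mulVec (feat φ V x k0) i)
                - φ ((layerMat V ⟨k0, hk0⟩).mulVec (feat φ W x k0) i))
            ≤ _root_.enorm ((layerMat V ⟨k0, hk0⟩).mulVec
                (fun i => feat φ V x k0 i - feat φ W x k0 i)) := by
              apply s16_enorm_mono
              intro i
              have h1 : ((layerMat V ⟨k0, hk0⟩).mulVec
                    (fun i => feat φ V x k0 i - feat φ W x k0 i)) i
                  = (layerMat V ⟨k0, hk0⟩).mulVec (feat φ V x k0) i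
                    - (layerMat V ⟨k0, hk0⟩).mulVec (feat φ W x k0) i := by
                have h2 : (fun i => feat φ V x k0 i - feat φ W x k0 i)
                    = feat φ V x k0 - feat φ W x k0 := rfl
                rw [h2, Matrix.mulVec_sub]; rfl
              rw [h1]
              exact s16_phi_lip hφ _ _
          _ ≤ opNorm (layerMat V ⟨k0, hk0⟩)
                * _root_.enorm (fun i => feat φ V x k0 i - feat φ W x k0 i) :=
              s16_enorm_mulVec_le _ _
          _ ≤ ‖V‖ * (opNorm (A - B) * ‖V‖ ^ ((ℓ : ℕ) + m)) :=
              mul_le_mul (s16_opNorm_layer_le V _) ihb (s16_enorm_nonneg _) (norm_nonneg V)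
          _ = opNorm (A - B) * ‖V‖ ^ ((ℓ : ℕ) + (m + 1)) := by
              rw [show (ℓ : ℕ) + (m + 1) = ((ℓ : ℕ) + m) + 1 by omega, pow_succ]; ring
    obtain ⟨m, hm⟩ : ∃ m, (ℓ : ℕ) + 1 + m = L := ⟨L - ((ℓ : ℕ) + 1), by omega⟩
    have hdL := hd m (by omega)
    rw [hm] at hdL
    have hout : outVec V = outVec W := by
      funext j
      exact congrFun (congrFun (hdiff.2 hcase) 0) j
    have hsum : netOut φ V x - netOut φ W x
        = ∑ j, outVec V j * (feat φ V x L j - feat φ W x L j) := by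
      rw [netOut, netOut, ← hout, ← Finset.sum_sub_distrib]
      exact Finset.sum_congr rfl fun j _ => (mul_sub _ _ _).symm
    rw [hsum, hop]
    calc |∑ j, outVec V j * (feat φ V x L j - feat φ W x L j)|
        ≤ _root_.enorm (outVec V) * _root_.enorm (fun j => feat φ V x L j - feat φ W x L j) :=
          s16_abs_sum_mul_le _ _
      _ ≤ ‖V‖ * (opNorm (A - B) * ‖V‖ ^ ((ℓ : ℕ) + m)) :=
          mul_le_mul (s16_outVec_le V) hdL (s16_enorm_nonneg _) (norm_nonneg V)
      _ = opNorm (A - B) * ‖V‖ ^ L := by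
          have hpw : ‖V‖ ^ L = ‖V‖ ^ (((ℓ : ℕ) + m) + 1) := by
            rw [show ((ℓ : ℕ) + m) + 1 = L by omega]
          rw [hpw, pow_succ]; ring
  · have hop : layerOpDiff V W ℓ = opNorm (outMat V - outMat W) := by
      rw [layerOpDiff, dif_neg hcase]
    have hfeq : feat φ V x L = feat φ W x L :=
      s16_feat_eq φ V W x L (fun j _ => hdiff.1 j (by omega)) L le_rfl
    have hsum : netOut φ V x - netOut φ W x
        = ((outMat V - outMat W).mulVec (feat φ V x L)) 0 := by
      have h1 : ((outMat V - outMat W).mulVec (feat φ V x L)) 0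
          = ∑ j, (outVec V j - outVec W j) * feat φ V x L j := by
        simp [Matrix.mulVec, dotProduct, outMat, outVec, Matrix.sub_apply]
      rw [h1, netOut, netOut, ← hfeq, ← Finset.sum_sub_distrib]
      exact Finset.sum_congr rfl fun j _ => (sub_mul _ _ _).symm
    rw [hsum, hop]
    calc |((outMat V - outMat W).mulVec (feat φ V x L)) 0|
        ≤ _root_.enorm ((outMat V - outMat W).mulVec (feat φ V x L)) := s16_abs_le_enorm _ _
      _ ≤ opNorm (outMat V - outMat W) * _root_.enorm (feat φ V x L) := s16_enorm_mulVec_le _ _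
      _ ≤ opNorm (outMat V - outMat W) * ‖V‖ ^ L :=
          mul_le_mul_of_nonneg_left (hfeatV L) (norm_nonneg _)

lemma s16_sigmoid_le_log (t : ℝ) : 1 / (1 + Real.exp (-t)) ≤ Real.log (1 + Real.exp t) := by
  have he : 0 < Real.exp t := Real.exp_pos t
  have h1 : (0:ℝ) < 1 + Real.exp t := by linarith
  have h2 : Real.log (1 / (1 + Real.exp t)) ≤ 1 / (1 + Real.exp t) - 1 :=
    Real.log_le_sub_one_of_pos (by positivity)
  rw [one_div, Real.log_inv] at h2
  have h4 : 1 / (1 + Real.exp (-t)) = 1 - 1 / (1 + Real.exp t) := by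
    rw [Real.exp_neg]
    field_simp
    ring
  rw [h4, one_div]
  linarith

lemma s16_sigmoid_diff_le {a b : ℝ} (hab : a ≤ b) :
    1 / (1 + Real.exp (-b)) - 1 / (1 + Real.exp (-a))
      ≤ (1 / (1 + Real.exp (-b))) * (b - a) := by
  have hea : 0 < Real.exp a := Real.exp_pos a
  have heb : 0 < Real.exp b := Real.exp_pos b
  have hle : Real.exp a ≤ Real.exp b := Real.exp_le_exp.2 hab
  have hba : 0 ≤ b - a := by linarith
  have hkey : Real.exp b - Real.exp a ≤ Real.exp b * (b - a) := by
    have h := Real.add_one_le_exp (a - b)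
    rw [Real.exp_sub] at h
    have h2 : (a - b + 1) * Real.exp b ≤ Real.exp a := (le_div_iff₀ heb).1 h
    nlinarith
  have hinv : (Real.exp a)⁻¹ - (Real.exp b)⁻¹ ≤ (b - a) * (Real.exp a)⁻¹ := by
    have h3 : (Real.exp a)⁻¹ - (Real.exp b)⁻¹
        = (Real.exp b - Real.exp a) / (Real.exp a * Real.exp b) :=
      inv_sub_inv hea.ne' heb.ne'
    rw [h3, div_le_iff₀ (by positivity)]
    have h4 : (b - a) * (Real.exp a)⁻¹ * (Real.exp a * Real.exp b)
        = Real.exp b * (b - a) := by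
      field_simp
    rw [h4]
    exact hkey
  rw [Real.exp_neg, Real.exp_neg]
  have h1 : (0:ℝ) < 1 + (Real.exp b)⁻¹ := by positivity
  have h2 : (0:ℝ) < 1 + (Real.exp a)⁻¹ := by positivity
  have hstep : (Real.exp a)⁻¹ - (Real.exp b)⁻¹ ≤ (b - a) * (1 + (Real.exp a)⁻¹) := by
    nlinarith
  rw [div_sub_div _ _ h1.ne' h2.ne', div_mul_eq_mul_div, div_le_div_iff₀ (by positivity) h1]
  nlinarith [mul_le_mul_of_nonneg_right hstep h1.le]

lemma s16_sigma_key {a b JV D : ℝ} (hJV : Real.log (1 + Real.exp a) = JV)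
    (hJW : Real.log (1 + Real.exp b) ≤ 2 * JV)
    (hD : |a - b| ≤ D) :
    |1 / (1 + Real.exp (-a)) - 1 / (1 + Real.exp (-b))| ≤ 2 * JV * D := by
  have hJVnn : 0 ≤ JV := by
    rw [← hJV]
    exact Real.log_nonneg (by nlinarith [Real.exp_pos a])
  have hDnn : 0 ≤ D := le_trans (abs_nonneg _) hD
  rcases le_total a b with hab | hab
  · have hmono : 1 / (1 + Real.exp (-a)) ≤ 1 / (1 + Real.exp (-b)) := by
      have : Real.exp (-b) ≤ Real.exp (-a) := Real.exp_le_exp.2 (by linarith)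
      apply one_div_le_one_div_of_le (by positivity)
      linarith
    rw [abs_sub_comm, abs_of_nonneg (by linarith)]
    have hd := s16_sigmoid_diff_le hab
    have hs : 1 / (1 + Real.exp (-b)) ≤ 2 * JV :=
      le_trans (s16_sigmoid_le_log b) hJW
    have hba : b - a ≤ D := le_trans (le_abs_self _) (abs_sub_comm a b ▸ hD)
    calc 1 / (1 + Real.exp (-b)) - 1 / (1 + Real.exp (-a))
        ≤ (1 / (1 + Real.exp (-b))) * (b - a) := hd
      _ ≤ (2 * JV) * D := mul_le_mul hs hba (by linarith) (by linarith)
  · have hmono : 1 / (1 + Real.exp (-b)) ≤ 1 / (1 + Real.exp (-a)) := by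
      have : Real.exp (-a) ≤ Real.exp (-b) := Real.exp_le_exp.2 (by linarith)
      apply one_div_le_one_div_of_le (by positivity)
      linarith
    rw [abs_of_nonneg (by linarith)]
    have hd := s16_sigmoid_diff_le hab
    have hs : 1 / (1 + Real.exp (-a)) ≤ 2 * JV := by
      have := s16_sigmoid_le_log a
      rw [hJV] at this
      linarith
    have hba : a - b ≤ D := le_trans (le_abs_self _) hD
    calc 1 / (1 + Real.exp (-a)) - 1 / (1 + Real.exp (-b))
        ≤ (1 / (1 + Real.exp (-a))) * (a - b) := hd
      _ ≤ (2 * JV) * D := mul_le_mul hs hba (by linarith) (by linarith)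

end Statement16Aux

/-- Lemma `l:g_lipschitz`: Lipschitz-type bound on `g_s` when a single
layer of the weights is changed. -/
theorem statement16
    (L p : ℕ) (hL : 1 ≤ L) (hp : 1 ≤ p)
    (φ : ℝ → ℝ) (h : ℝ) (hh0 : 0 < h) (hφ : SmoothApproxReLU φ h)
    (x : Fin p → ℝ) (hx : _root_.enorm x = 1) (y : ℝ) (hy : y = 1 ∨ y = -1)
    (V W : Params L p) (ℓ : Fin (L + 1)) (hdiff : eqExcept V W ℓ)
    (hsmall : layerOpDiff V W ℓ * ‖V‖ ^ (L + 1) ≤ 1)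
    (hV : Real.sqrt ((L : ℝ) + 1 / 2) < ‖V‖) (hW : Real.sqrt ((L : ℝ) + 1 / 2) < ‖W‖)
    (hconv : ∀ θ : ℝ, θ ∈ Set.Icc (0 : ℝ) 1 →
      lossS φ x y (θ • V + (1 - θ) • W) ≤ 2 * lossS φ x y V) :
    |gS φ x y V - gS φ x y W| ≤
      2 * lossS φ x y V * layerOpDiff V W ℓ * ‖V‖ ^ (L + 1) := by
  have hV1 : 1 ≤ ‖V‖ := by
    calc (1:ℝ) = Real.sqrt 1 := Real.sqrt_one.symm
      _ ≤ Real.sqrt ((L : ℝ) + 1 / 2) := by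
          apply Real.sqrt_le_sqrt
          have : (1:ℝ) ≤ (L : ℝ) := by exact_mod_cast hL
          linarith
      _ ≤ ‖V‖ := hV.le
  have hopdnn : 0 ≤ layerOpDiff V W ℓ := by
    rw [layerOpDiff]
    split <;> exact norm_nonneg _
  have hpownn : (0:ℝ) ≤ ‖V‖ ^ (L + 1) := pow_nonneg (by linarith) _
  have hfd : |netOut φ V x - netOut φ W x| ≤ layerOpDiff V W ℓ * ‖V‖ ^ (L + 1) := by
    refine (s16_netOut_diff hφ x hx V W ℓ hdiff hV1).trans ?_
    exact mul_le_mul_of_nonneg_left (pow_le_pow_right₀ hV1 (Nat.le_succ L)) hopdnn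
  have hJW : lossS φ x y W ≤ 2 * lossS φ x y V := by
    have h0 := hconv 0 ⟨le_refl 0, zero_le_one⟩
    simpa using h0
  have hy1 : |y| = 1 := by rcases hy with h' | h' <;> simp [h']
  have hga : gS φ x y V = 1 / (1 + Real.exp (-(-(y * netOut φ V x)))) := by
    rw [gS, neg_neg]
  have hgb : gS φ x y W = 1 / (1 + Real.exp (-(-(y * netOut φ W x)))) := by
    rw [gS, neg_neg]
  have hJVdef : Real.log (1 + Real.exp (-(y * netOut φ V x))) = lossS φ x y V := by
    rw [lossS]
  have hJW' : Real.log (1 + Real.exp (-(y * netOut φ W x))) ≤ 2 * lossS φ x y V := by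
    rw [show Real.log (1 + Real.exp (-(y * netOut φ W x))) = lossS φ x y W from rfl]
    exact hJW
  have hD : |(-(y * netOut φ V x)) - (-(y * netOut φ W x))|
      ≤ layerOpDiff V W ℓ * ‖V‖ ^ (L + 1) := by
    have he : (-(y * netOut φ V x)) - (-(y * netOut φ W x))
        = y * (netOut φ W x - netOut φ V x) := by ring
    rw [he, abs_mul, hy1, one_mul, abs_sub_comm]
    exact hfd
  have hmain := s16_sigma_key hJVdef hJW' hD
  rw [hga, hgb]
  calc |1 / (1 + Real.exp (-(-(y * netOut φ V x)))) -
        1 / (1 + Real.exp (-(-(y * netOut φ W x))))|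
      ≤ 2 * lossS φ x y V * (layerOpDiff V W ℓ * ‖V‖ ^ (L + 1)) := hmain
    _ = 2 * lossS φ x y V * layerOpDiff V W ℓ * ‖V‖ ^ (L + 1) := by ring
end
end
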